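/- arXiv:2111.15324 — 9 statements merged into one kernel-verified Lean document; each statement's English description precedes it below -/
import Mathlib

section
/- Let P : [a,b] → ℝ be a nondecreasing polynomial function of degree at most m ≥ 1. Then P(a + (b-a)/(2m²+1)) ≤ P(a) + (2m²/(2m²+1))·(P(b) - P(a)). -/
open Finset Nat

lemma asc_prod (c n : ℕ) : ∏ j ∈ range n, (c + j) = c.ascFactorial n := by
  induction n with
  | zero => simp [Nat.ascFactorial]
  | succ k ih => rw [prod_range_succ, ih, Nat.ascFactorial_succ, mul_comm]

lemma fact_ineq (n u : ℕ) (h : u ≤ n) : n ! * n ! ≤ (n - u)! * (n + u)! := by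
  have h1 : (n - u)! * n.descFactorial u = n ! := Nat.factorial_mul_descFactorial h
  have h2 : n ! * (n + 1).ascFactorial u = (n + u)! := Nat.factorial_mul_ascFactorial n u
  have h3 : n.descFactorial u ≤ (n + 1).ascFactorial u := by
    calc n.descFactorial u ≤ n ^ u := Nat.descFactorial_le_pow n u
    _ ≤ (n+1) ^ u := Nat.pow_le_pow_left (Nat.le_succ n) u
    _ ≤ (n + 1).ascFactorial u := Nat.pow_succ_le_ascFactorial (n+1) u
  calc n ! * n ! = (n - u)! * n.descFactorial u * n ! := by rw [h1]
  _ ≤ (n - u)! * (n + 1).ascFactorial u * n ! := by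
      exact Nat.mul_le_mul_right _ (Nat.mul_le_mul_left _ h3)
  _ = (n - u)! * (n + u)! := by rw [← h2]; ring

lemma coeff_bound (n i : ℕ) (hi : i < n) :
    ∏ j ∈ (range n).erase i, (((j:ℝ)+1))^2
      ≤ 2 * ∏ j ∈ (range n).erase i, |((i:ℝ)+1)^2 - ((j:ℝ)+1)^2| := by
  classical
  set e := (range n).erase i with he
  have hmem : i ∈ range n := mem_range.mpr hi
  -- split of e
  have hsplit : e = range i ∪ Ico (i+1) n := by
    ext j; simp only [he, mem_erase, mem_range, mem_union, mem_Ico]; omega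
  have hdisj : Disjoint (range i) (Ico (i+1) n) := by
    rw [Finset.disjoint_left]; intro j hj hj'
    simp only [mem_range] at hj; simp only [mem_Ico] at hj'; omega
  -- ℕ-level products
  have hA : (i+1) * ∏ j ∈ e, (j+1) = n ! := by
    rw [he, Finset.mul_prod_erase (range n) (fun j => j+1) hmem]
    exact prod_range_add_one_eq_factorial n
  have hB : (i+(i+2)) * ∏ j ∈ e, (i+j+2) = (i+2).ascFactorial n := by
    have := Finset.mul_prod_erase (range n) (fun j => i+j+2) hmem
    rw [he]
    rw [show i + (i+2) = i + i + 2 by ring] at *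
    rw [this]
    rw [← asc_prod (i+2) n]
    exact Finset.prod_congr rfl fun j _ => by ring
  have hB2 : (i+1)! * (i+2).ascFactorial n = (n+i+1)! := by
    have := Nat.factorial_mul_ascFactorial (i+1) n
    rw [show i+1+n = n+i+1 by ring] at this
    exact this
  have hD1 : ∏ j ∈ range i, (i - j) = i ! := by
    have h := Finset.prod_range_reflect (fun j => j + 1) i
    rw [← prod_range_add_one_eq_factorial i, ← h]
    refine Finset.prod_congr rfl fun j hj => ?_
    simp only [mem_range] at hj; omega
  have hD2 : ∏ j ∈ Ico (i+1) n, (j - i) = (n-1-i)! := by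
    rw [Finset.prod_Ico_eq_prod_range]
    rw [← prod_range_add_one_eq_factorial (n-1-i)]
    rw [show n - (i+1) = n-1-i by omega]
    exact Finset.prod_congr rfl fun j hj => by omega
  -- real-level products
  set x : ℝ := ∏ j ∈ e, ((j:ℝ)+1) with hx
  set y : ℝ := ∏ j ∈ e, ((i:ℝ)+(j:ℝ)+2) with hy
  set z : ℝ := ∏ j ∈ e, |(i:ℝ)-(j:ℝ)| with hz
  have hx' : ((i:ℝ)+1) * x = (n ! : ℝ) := by
    rw [hx, ← hA]; push_cast; ring
  have hy' : ((i:ℝ)+(i:ℝ)+2) * y = ((i+2).ascFactorial n : ℝ) := by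
    rw [hy, ← hB]; push_cast; ring
  have hz' : z = (i ! : ℝ) * ((n-1-i)! : ℝ) := by
    rw [hz, hsplit, Finset.prod_union hdisj, ← hD1, ← hD2]
    push_cast
    congr 1
    · refine Finset.prod_congr rfl fun j hj => ?_
      simp only [mem_range] at hj
      rw [Nat.cast_sub (by omega), abs_of_nonneg (sub_nonneg.mpr (Nat.cast_le.mpr hj.le))]
    · refine Finset.prod_congr rfl fun j hj => ?_
      simp only [mem_Ico] at hj
      rw [Nat.cast_sub (by omega), abs_sub_comm, abs_of_nonneg]
      have : (i:ℝ) ≤ j := Nat.cast_le.mpr (by omega)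
      linarith
  -- rewrite goal
  have hgoal1 : ∏ j ∈ e, (((j:ℝ)+1))^2 = x^2 := by
    rw [hx, ← Finset.prod_pow]
  have hgoal2 : ∏ j ∈ e, |((i:ℝ)+1)^2 - ((j:ℝ)+1)^2| = y * z := by
    rw [hy, hz, ← Finset.prod_mul_distrib]
    refine Finset.prod_congr rfl fun j _ => ?_
    rw [show ((i:ℝ)+1)^2 - ((j:ℝ)+1)^2 = ((i:ℝ)+(j:ℝ)+2) * ((i:ℝ)-(j:ℝ)) by ring,
      abs_mul, abs_of_nonneg (by positivity)]
  rw [hgoal1, hgoal2]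
  -- key factorial inequality
  have hkey : (n ! : ℝ) * (n ! : ℝ) ≤ ((n-1-i)! : ℝ) * ((n+i+1)! : ℝ) := by
    have := fact_ineq n (i+1) (by omega)
    rw [show n - (i+1) = n-1-i by omega, show n + (i+1) = n+i+1 by omega] at this
    exact_mod_cast this
  have hfac : ((i+1)! : ℝ) = ((i:ℝ)+1) * (i ! : ℝ) := by
    rw [Nat.factorial_succ]; push_cast; ring
  have hB2' : ((i+1)! : ℝ) * ((i+2).ascFactorial n : ℝ) = ((n+i+1)! : ℝ) := by
    exact_mod_cast congrArg (Nat.cast : ℕ → ℝ) hB2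
  have hc : (0:ℝ) < ((i:ℝ)+1)^2 * 2 * ((i:ℝ)+1) := by positivity
  have hchain : ((i:ℝ)+1)^2 * 2 * ((i:ℝ)+1) * x^2 ≤ ((i:ℝ)+1)^2 * 2 * ((i:ℝ)+1) * (2 * (y * z)) := by
    have lhs_eq : ((i:ℝ)+1)^2 * 2 * ((i:ℝ)+1) * x^2
        = (((i:ℝ)+1) * x) * (((i:ℝ)+1) * x) * (2 * (((i:ℝ)+1))) := by ring
    have rhs_eq : ((i:ℝ)+1)^2 * 2 * ((i:ℝ)+1) * (2 * (y * z))
        = (((n-1-i)! : ℝ) * ((n+i+1)! : ℝ)) * (2 * ((i:ℝ)+1)) := by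
      rw [← hB2', hfac, ← hy', hz']
      ring
    rw [lhs_eq, rhs_eq, hx']
    have h2 : (0:ℝ) < 2 * ((i:ℝ)+1) := by positivity
    exact mul_le_mul_of_nonneg_right hkey h2.le
  nlinarith [hchain, hc, sq_nonneg x]

/-- Markov-type estimate: a nondecreasing polynomial of degree at most `m ≥ 1` on `[a,b]`
satisfies `P(a + (b-a)/(2m²+1)) ≤ P(a) + (2m²/(2m²+1))·(P(b)-P(a))`. -/
theorem stmt0 (a b : ℝ) (hab : a < b) (m : ℕ) (hm : 1 ≤ m)
    (P : Polynomial ℝ) (hdeg : P.natDegree ≤ m)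
    (hmono : MonotoneOn (fun x => P.eval x) (Set.Icc a b)) :
    P.eval (a + (b - a) / (2 * (m : ℝ) ^ 2 + 1)) ≤
      P.eval a + (2 * (m : ℝ) ^ 2 / (2 * (m : ℝ) ^ 2 + 1)) * (P.eval b - P.eval a) := by
  have hba : (0:ℝ) < b - a := sub_pos.mpr hab
  have hM : (0:ℝ) < 2 * (m:ℝ) ^ 2 + 1 := by positivity
  set t : ℝ := (b - a) / (2 * (m:ℝ) ^ 2 + 1) with ht
  have htpos : 0 < t := by positivity
  rcases eq_or_lt_of_le hm with h1 | h2
  · -- m = 1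
    have hm1 : m = 1 := h1.symm
    subst hm1
    have hP := Polynomial.eq_X_add_C_of_natDegree_le_one hdeg
    set c1 := P.coeff 1
    set c0 := P.coeff 0
    have hev : ∀ x : ℝ, P.eval x = c1 * x + c0 := by
      intro x; conv_lhs => rw [hP]
      simp
    have hmono' := hmono (Set.left_mem_Icc.mpr hab.le) (Set.right_mem_Icc.mpr hab.le) hab.le
    simp only [hev] at hmono' ⊢
    have hc1 : 0 ≤ c1 * (b - a) := by nlinarith
    push_cast
    nlinarith [hc1, hM, hba]
  · -- 2 ≤ m
    have hm2 : 2 ≤ m := h2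
    set n := m + 1 with hn
    set s : Finset ℕ := range n with hs
    set v : ℕ → ℝ := fun i => a + ((i:ℝ) + 1) ^ 2 * t with hv
    have hsq : ∀ {i j : ℕ}, i < j → ((i:ℝ)+1)^2 < ((j:ℝ)+1)^2 := by
      intro i j h
      have : (i:ℝ) < (j:ℝ) := Nat.cast_lt.mpr h
      nlinarith
    have hsqne : ∀ {i j : ℕ}, i ≠ j → ((i:ℝ)+1)^2 ≠ ((j:ℝ)+1)^2 := by
      intro i j h
      rcases lt_or_gt_of_ne h with h' | h'
      · exact ne_of_lt (hsq h')
      · exact ne_of_gt (hsq h')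
    have hinj : Set.InjOn v s := by
      intro i _ j _ hij
      by_contra hne
      have : ((i:ℝ)+1)^2 * t = ((j:ℝ)+1)^2 * t := by
        have := hij; simp only [hv] at this; linarith
      exact hsqne hne (mul_right_cancel₀ (ne_of_gt htpos) this)
    have hcard : s.card = n := card_range n
    have hdeglt : P.degree < (s.card : WithBot ℕ) := by
      rw [hcard]
      calc P.degree ≤ (P.natDegree : WithBot ℕ) := Polynomial.degree_le_natDegree
      _ ≤ (m : WithBot ℕ) := by exact_mod_cast Nat.cast_le.mpr hdeg
      _ < (n : WithBot ℕ) := by exact_mod_cast Nat.cast_lt.mpr (Nat.lt_succ_self m)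
    have hinterp := Lagrange.eq_interpolate hinj hdeglt
    -- coefficients
    set c : ℕ → ℝ := fun i => (Lagrange.basis s v i).eval a with hc
    have hevalA : P.eval a = ∑ i ∈ s, P.eval (v i) * c i := by
      conv_lhs => rw [hinterp]
      rw [Lagrange.interpolate_apply, Polynomial.eval_finset_sum]
      exact Finset.sum_congr rfl fun i _ => by simp [hc]
    have hsumc : ∑ i ∈ s, c i = 1 := by
      have h1 := Lagrange.sum_basis hinj ⟨0, by simp [hs, hn]⟩
      have := congrArg (Polynomial.eval a) h1
      rw [Polynomial.eval_finset_sum] at this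
      simpa using this
    -- node positions
    have hvsq : ∀ i ∈ s, ((i:ℝ)+1)^2 ≤ 2*(m:ℝ)^2 + 1 := by
      intro i hi
      simp only [hs, mem_range, hn] at hi
      have hi' : (i:ℝ) ≤ (m:ℝ) := Nat.cast_le.mpr (by omega)
      have hm' : (2:ℝ) ≤ (m:ℝ) := by exact_mod_cast hm2
      nlinarith
    have hvmem : ∀ i ∈ s, v i ∈ Set.Icc a b := by
      intro i hi
      constructor
      · simp only [hv]; nlinarith [sq_nonneg ((i:ℝ)+1)]
      · simp only [hv]
        have h1 : ((i:ℝ)+1)^2 * t ≤ (2*(m:ℝ)^2+1) * t :=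
          mul_le_mul_of_nonneg_right (hvsq i hi) htpos.le
        have h2 : (2*(m:ℝ)^2+1) * t = b - a := by
          rw [ht]; field_simp
        linarith
    have hatmem : a + t ∈ Set.Icc a b := by
      constructor
      · linarith
      · have : t ≤ b - a := by
          rw [ht, div_le_iff₀ hM]; nlinarith
        linarith
    have hbmem : b ∈ Set.Icc a b := Set.right_mem_Icc.mpr hab.le
    have hat_le : ∀ i ∈ s, a + t ≤ v i := by
      intro i hi
      simp only [hv]
      have h1 : (1:ℝ) ≤ ((i:ℝ)+1)^2 := by nlinarith [(Nat.cast_nonneg i : (0:ℝ) ≤ (i:ℕ))]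
      nlinarith [mul_le_mul_of_nonneg_right h1 htpos.le]
    -- monotonicity values
    set Q := P.eval (a + t) with hQ
    set B := P.eval b with hB
    have hQB : Q ≤ B := hmono hatmem hbmem (by linarith [hatmem.2])
    have hQi : ∀ i ∈ s, Q ≤ P.eval (v i) ∧ P.eval (v i) ≤ B := by
      intro i hi
      exact ⟨hmono hatmem (hvmem i hi) (hat_le i hi),
        hmono (hvmem i hi) hbmem (hvmem i hi).2⟩
    -- coefficient bound
    have hcbound : ∀ i ∈ s, |c i| ≤ 2 := by
      intro i hi
      simp only [hs, mem_range] at hi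
      have hform : c i = ∏ j ∈ (range n).erase i, (a - v j) / (v i - v j) := by
        simp only [hc, hs, Lagrange.basis, Polynomial.eval_prod, Lagrange.basisDivisor]
        refine Finset.prod_congr rfl fun j _ => ?_
        simp [div_eq_inv_mul]
      have hterm : ∀ j ∈ (range n).erase i,
          |(a - v j) / (v i - v j)| = ((j:ℝ)+1)^2 / |((i:ℝ)+1)^2 - ((j:ℝ)+1)^2| := by
        intro j hj
        have hji : j ≠ i := (mem_erase.mp hj).1
        have h1 : a - v j = -(((j:ℝ)+1)^2 * t) := by simp only [hv]; ring
        have h2 : v i - v j = (((i:ℝ)+1)^2 - ((j:ℝ)+1)^2) * t := by simp only [hv]; ring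
        rw [h1, h2, abs_div, abs_neg, abs_mul, abs_mul, abs_of_pos htpos,
          abs_of_nonneg (sq_nonneg _), mul_div_mul_right _ _ (ne_of_gt htpos)]
      have hD : (0:ℝ) < ∏ j ∈ (range n).erase i, |((i:ℝ)+1)^2 - ((j:ℝ)+1)^2| := by
        refine Finset.prod_pos fun j hj => ?_
        exact abs_pos.mpr (sub_ne_zero.mpr (hsqne (mem_erase.mp hj).1.symm))
      rw [hform, Finset.abs_prod]
      rw [Finset.prod_congr rfl hterm, Finset.prod_div_distrib]
      rw [div_le_iff₀ hD]
      exact coeff_bound n i hi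
    -- sum bound
    have hsum : ∀ i ∈ s, -(2 * (B - Q)) ≤ (P.eval (v i) - Q) * c i := by
      intro i hi
      obtain ⟨hq1, hq2⟩ := hQi i hi
      obtain ⟨hl, hr⟩ := abs_le.mp (hcbound i hi)
      nlinarith
    have hPA : P.eval a - Q = ∑ i ∈ s, (P.eval (v i) - Q) * c i := by
      rw [hevalA]
      rw [Finset.sum_congr rfl (fun i _ => by ring :
        ∀ i ∈ s, (P.eval (v i) - Q) * c i = P.eval (v i) * c i - Q * c i)]
      rw [Finset.sum_sub_distrib, ← Finset.mul_sum, hsumc]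
      ring
    have hlow : -(↑n * (2 * (B - Q))) ≤ P.eval a - Q := by
      rw [hPA]
      calc -(↑n * (2 * (B - Q))) = ∑ _i ∈ s, -(2 * (B - Q)) := by
            rw [Finset.sum_const, hcard]; push_cast; ring
      _ ≤ ∑ i ∈ s, (P.eval (v i) - Q) * c i := Finset.sum_le_sum hsum
    -- final algebra
    have hn2 : 2 * (n:ℝ) ≤ 2 * (m:ℝ)^2 := by
      have hm' : (2:ℝ) ≤ (m:ℝ) := by exact_mod_cast hm2
      simp only [hn]; push_cast; nlinarith
    have hkey : Q - P.eval a ≤ 2 * (m:ℝ)^2 * (B - Q) := by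
      have h1 : Q - P.eval a ≤ (n:ℝ) * (2 * (B - Q)) := by linarith
      nlinarith [hQB]
    rw [div_mul_eq_mul_div, ← sub_le_iff_le_add', le_div_iff₀ hM]
    linarith [hkey]
end

section
/- If P : [-1,1] → ℝ is a polynomial of degree at most m with P monotone nondecreasing on [0,1] (viewed after rescaling), P(0) = 0 and P(1) = 1, then P(1/(2m²+1)) ≤ 2m²/(2m²+1). -/
open Finset Polynomial


-- helper: ∏_{i<n} (n-i) = n!
lemma prod_range_sub_eq_factorial (n : ℕ) : ∏ i ∈ range n, (n - i) = n.factorial := by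
  induction n with
  | zero => simp
  | succ n ih =>
    rw [Finset.prod_range_succ']
    simp only [Nat.succ_sub_succ]
    rw [ih, Nat.sub_zero, Nat.factorial_succ, Nat.mul_comm]

-- helper: n! * ∏_{i<k}(n+1+i) = (n+k)!
lemma factorial_mul_prod_range (n k : ℕ) :
    n.factorial * ∏ i ∈ range k, (n + 1 + i) = (n + k).factorial := by
  induction k with
  | zero => simp
  | succ k ih =>
    rw [Finset.prod_range_succ, ← Nat.mul_assoc, ih]
    rw [← Nat.add_assoc, Nat.factorial_succ]
    ring

lemma sq_factorial_le (m j : ℕ) (hj : j ≤ m) :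
    m.factorial ^ 2 ≤ (m - j).factorial * (m + j).factorial := by
  induction j with
  | zero => simp [pow_two]
  | succ j ih =>
    have hj' : j ≤ m := le_of_lt hj
    have h1 : m - j = (m - (j+1)) + 1 := by omega
    have h2 : (m + (j+1)).factorial = (m + j + 1) * (m + j).factorial := by
      rw [← Nat.factorial_succ]; ring_nf
    have h3 : (m - j).factorial = (m - j) * (m - (j+1)).factorial := by
      rw [h1, Nat.factorial_succ, ← h1]
    calc m.factorial ^ 2 ≤ (m - j).factorial * (m + j).factorial := ih hj'
      _ = (m - j) * ((m - (j+1)).factorial * (m + j).factorial) := by rw [h3]; ring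
      _ ≤ (m + j + 1) * ((m - (j+1)).factorial * (m + j).factorial) := by
          apply Nat.mul_le_mul_right; omega
      _ = (m - (j+1)).factorial * (m + (j+1)).factorial := by rw [h2]; ring

lemma sum_inv_sq_le (m : ℕ) : ∑ j ∈ Icc 1 m, (1:ℝ) / (j:ℝ)^2 ≤ 2 := by
  have h : ∀ n : ℕ, 1 ≤ n → ∑ j ∈ Icc 1 n, (1:ℝ) / (j:ℝ)^2 ≤ 2 - 1/(n:ℝ) := by
    intro n hn
    induction n with
    | zero => omega
    | succ n ih =>
      rcases Nat.eq_or_lt_of_le hn with h1 | h1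
      · simp [← h1]; norm_num
      · have hn1 : 1 ≤ n := by omega
        rw [← Finset.insert_Icc_right_eq_Icc_add_one (by omega : 1 ≤ n + 1), Finset.sum_insert (by simp)]
        have hnr : (1:ℝ) ≤ n := by exact_mod_cast hn1
        have key : (1:ℝ)/((n:ℝ)+1)^2 ≤ 1/(n:ℝ) - 1/((n:ℝ)+1) := by
          rw [div_sub_div _ _ (by linarith) (by linarith)]
          rw [div_le_div_iff₀ (by positivity) (by positivity)]
          ring_nf
          nlinarith
        have := ih hn1
        push_cast
        push_cast at this
        linarith
  rcases Nat.eq_zero_or_pos m with h0 | h0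
  · simp [h0]
  · have := h m h0
    have : (0:ℝ) < m := by exact_mod_cast h0
    have := h m h0
    have hpos : (0:ℝ) < 1/(m:ℝ) := by positivity
    linarith

lemma nat_prod_bound (m j : ℕ) (hj1 : 1 ≤ j) (hjm : j ≤ m) :
    ∏ i ∈ (Icc 1 m).erase j, i ^ 2 ≤ 2 * ∏ i ∈ (Icc 1 m).erase j, Nat.dist (j^2) (i^2) := by
  obtain ⟨a, rfl⟩ : ∃ a, j = a + 1 := ⟨j - 1, by omega⟩
  obtain ⟨b, rfl⟩ : ∃ b, m = (a + 1) + b := ⟨m - (a+1), by omega⟩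
  have hsplit : (Icc 1 (a+1+b)).erase (a+1) = Ico 1 (a+1) ∪ Ico (a+2) (a+b+2) := by
    ext i; simp only [mem_erase, mem_Icc, mem_Ico, mem_union]; omega
  have hdisj : Disjoint (Ico 1 (a+1)) (Ico (a+2) (a+b+2)) := by
    rw [Finset.disjoint_left]; intro i hi hi'; simp only [mem_Ico] at hi hi'; omega
  rw [hsplit, Finset.prod_union hdisj, Finset.prod_union hdisj]
  have hdl : ∀ i ∈ Ico 1 (a+1), Nat.dist ((a+1)^2) (i^2) = (a+1-i) * (a+1+i) := by
    intro i hi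
    simp only [mem_Ico] at hi
    rw [Nat.dist_eq_sub_of_le_right (Nat.pow_le_pow_left (by omega) 2)]
    obtain ⟨d, hd⟩ : ∃ d, a + 1 = i + d := ⟨a + 1 - i, by omega⟩
    rw [hd]
    have h5 : (i + d)^2 = i^2 + (d * (d + 2*i)) := by ring
    rw [h5, Nat.add_sub_cancel_left]
    have h6 : i + d - i = d := by omega
    rw [h6]; ring
  have hdr : ∀ i ∈ Ico (a+2) (a+b+2), Nat.dist ((a+1)^2) (i^2) = (i-(a+1)) * (i+(a+1)) := by
    intro i hi
    simp only [mem_Ico] at hi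
    rw [Nat.dist_eq_sub_of_le (Nat.pow_le_pow_left (by omega) 2)]
    obtain ⟨d, rfl⟩ : ∃ d, i = (a+1) + d := ⟨i - (a+1), by omega⟩
    have h5 : ((a+1) + d)^2 = (a+1)^2 + (d * (d + 2*(a+1))) := by ring
    rw [h5, Nat.add_sub_cancel_left]
    have h6 : a + 1 + d - (a+1) = d := by omega
    rw [h6]; ring
  rw [Finset.prod_congr rfl hdl, Finset.prod_congr rfl hdr,
    Finset.prod_mul_distrib, Finset.prod_mul_distrib]
  -- six product computations
  have e1 : ∏ i ∈ Ico 1 (a+1), i ^ 2 = a.factorial ^ 2 := by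
    rw [Finset.prod_pow, Finset.prod_Ico_id_eq_factorial]
  set q1 := ∏ i ∈ Ico (a+2) (a+b+2), i with hq1def
  have e2 : ∏ i ∈ Ico (a+2) (a+b+2), i ^ 2 = q1 ^ 2 := by rw [Finset.prod_pow]
  have hq1 : (a+1).factorial * q1 = (a+1+b).factorial := by
    rw [hq1def, Finset.prod_Ico_eq_prod_range]
    have : a + b + 2 - (a + 2) = b := by omega
    rw [this]
    have : ∀ k ∈ range b, (a + 2 + k) = (a + 1) + 1 + k := fun k _ => by omega
    rw [Finset.prod_congr rfl this, factorial_mul_prod_range]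
  have e3 : ∏ i ∈ Ico 1 (a+1), (a+1-i) = a.factorial := by
    rw [Finset.prod_Ico_eq_prod_range]
    have h7 : a + 1 - 1 = a := by omega
    rw [h7]
    have : ∀ k ∈ range a, (a + 1 - (1 + k)) = a - k := fun k _ => by omega
    rw [Finset.prod_congr rfl this, prod_range_sub_eq_factorial]
  set t1 := ∏ i ∈ Ico 1 (a+1), (a+1+i) with ht1def
  have ht1 : (a+1).factorial * t1 = (2*a+1).factorial := by
    rw [ht1def, Finset.prod_Ico_eq_prod_range]
    have h7 : a + 1 - 1 = a := by omega
    rw [h7]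
    have : ∀ k ∈ range a, (a + 1 + (1 + k)) = (a + 1) + 1 + k := fun k _ => by omega
    rw [Finset.prod_congr rfl this, factorial_mul_prod_range]
    congr 1; omega
  have e5 : ∏ i ∈ Ico (a+2) (a+b+2), (i-(a+1)) = b.factorial := by
    rw [Finset.prod_Ico_eq_prod_range]
    have h7 : a + b + 2 - (a + 2) = b := by omega
    rw [h7]
    have : ∀ k ∈ range b, (a + 2 + k - (a+1)) = k + 1 := fun k _ => by omega
    rw [Finset.prod_congr rfl this]
    exact Finset.prod_range_add_one_eq_factorial b
  set t2 := ∏ i ∈ Ico (a+2) (a+b+2), (i+(a+1)) with ht2def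
  have ht2 : (2*a+2).factorial * t2 = (2*a+2+b).factorial := by
    rw [ht2def, Finset.prod_Ico_eq_prod_range]
    have h7 : a + b + 2 - (a + 2) = b := by omega
    rw [h7]
    have : ∀ k ∈ range b, (a + 2 + k + (a+1)) = (2*a+2) + 1 + k := fun k _ => by omega
    rw [Finset.prod_congr rfl this, factorial_mul_prod_range]
  rw [e1, e2, e3, e5]
  -- final arithmetic
  have key : ((a+1+b).factorial)^2 ≤ b.factorial * (2*a+2+b).factorial := by
    have h := sq_factorial_le (a+1+b) (a+1) (by omega)
    have h8 : a + 1 + b - (a + 1) = b := by omega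
    have h9 : a + 1 + b + (a + 1) = 2*a+2+b := by omega
    rwa [h8, h9] at h
  refine Nat.le_of_mul_le_mul_left ?_ (show 0 < ((a+1).factorial)^2 * (2*a+2).factorial by positivity)
  have hR : ((a+1).factorial)^2 * (2*a+2).factorial * (2 * ((a.factorial * t1) * (b.factorial * t2)))
      = 2*(a.factorial)*(b.factorial)*((a+1).factorial)*((2*a+1).factorial)*((2*a+2+b).factorial) := by
    rw [← ht1, ← ht2]; ring
  rw [hR]
  have h2a2 : (2*a+2).factorial = (2*a+2) * (2*a+1).factorial := by
    rw [show 2*a+2 = (2*a+1)+1 by omega, Nat.factorial_succ]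
  have ha1 : (a+1).factorial = (a+1) * a.factorial := Nat.factorial_succ a
  calc ((a+1).factorial)^2 * (2*a+2).factorial * (a.factorial ^ 2 * q1 ^ 2)
      = a.factorial^2 * (2*a+2).factorial * ((a+1).factorial * q1)^2 := by ring
    _ = a.factorial^2 * (2*a+2).factorial * ((a+1+b).factorial)^2 := by rw [hq1]
    _ = (a.factorial^2 * (2*a+1).factorial * (2*a+2)) * ((a+1+b).factorial)^2 := by
        rw [h2a2]; ring
    _ ≤ (a.factorial^2 * (2*a+1).factorial * (2*a+2)) * (b.factorial * (2*a+2+b).factorial) :=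
        Nat.mul_le_mul_left _ key
    _ = 2*(a.factorial)*(b.factorial)*((a+1)*a.factorial)*((2*a+1).factorial)*((2*a+2+b).factorial) := by
        ring
    _ = 2*(a.factorial)*(b.factorial)*((a+1).factorial)*((2*a+1).factorial)*((2*a+2+b).factorial) := by
        rw [ha1]

lemma cast_nat_dist (p q : ℕ) : ((Nat.dist p q : ℕ) : ℝ) = |(p:ℝ) - (q:ℝ)| := by
  rcases le_total p q with h | h
  · rw [Nat.dist_eq_sub_of_le h, Nat.cast_sub h, abs_sub_comm, abs_of_nonneg]
    simp only [sub_nonneg]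
    exact_mod_cast h
  · rw [Nat.dist_eq_sub_of_le_right h, Nat.cast_sub h, abs_of_nonneg]
    simp only [sub_nonneg]
    exact_mod_cast h

lemma prod_ratio_le (m j : ℕ) (h1 : 1 ≤ j) (h2 : j ≤ m) :
    ∏ i ∈ (Icc 1 m).erase j, ((i:ℝ)^2 / |(j:ℝ)^2 - (i:ℝ)^2|) ≤ 2 := by
  have hcong : ∀ i ∈ (Icc 1 m).erase j,
      ((i:ℝ)^2 / |(j:ℝ)^2 - (i:ℝ)^2|) = ((i^2 : ℕ):ℝ) / ((Nat.dist (j^2) (i^2) : ℕ):ℝ) := by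
    intro i _
    rw [cast_nat_dist]
    push_cast
    ring_nf
  rw [Finset.prod_congr rfl hcong, Finset.prod_div_distrib, ← Nat.cast_prod, ← Nat.cast_prod]
  have hdpos : 0 < ∏ i ∈ (Icc 1 m).erase j, Nat.dist (j^2) (i^2) := by
    apply Finset.prod_pos
    intro i hi
    have hne : i ≠ j := (Finset.mem_erase.1 hi).1
    have hne2 : j^2 ≠ i^2 := fun h => hne (Nat.pow_left_injective (by norm_num) h.symm)
    exact Nat.pos_of_ne_zero (fun h => hne2 (Nat.eq_of_dist_eq_zero h))
  rw [div_le_iff₀ (by exact_mod_cast hdpos)]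
  have := nat_prod_bound m j h1 h2
  calc ((∏ i ∈ (Icc 1 m).erase j, i ^ 2 : ℕ) : ℝ)
      ≤ ((2 * ∏ i ∈ (Icc 1 m).erase j, Nat.dist (j^2) (i^2) : ℕ) : ℝ) := by exact_mod_cast this
    _ = 2 * ((∏ i ∈ (Icc 1 m).erase j, Nat.dist (j^2) (i^2) : ℕ) : ℝ) := by push_cast; ring

lemma endpoint_markov (m : ℕ) (hm : 1 ≤ m) (g : Polynomial ℝ) (hdeg : g.natDegree ≤ m)
    (M : ℝ) (hM : ∀ y ∈ Set.Icc (0:ℝ) 1, |g.eval y| ≤ M) :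
    |g.derivative.eval 0| ≤ 8 * (m:ℝ)^2 * M := by
  have hm0 : (0:ℝ) < (m:ℝ)^2 := by
    have : (1:ℝ) ≤ m := by exact_mod_cast hm
    positivity
  set v : ℕ → ℝ := fun i => (i:ℝ)^2 / (m:ℝ)^2 with hv
  have hinj : Set.InjOn v (range (m+1)) := by
    intro i _ k _ h
    simp only [hv] at h
    field_simp at h
    exact_mod_cast (pow_left_inj₀ (by positivity) (by positivity) two_ne_zero).1 h
  have hdeglt : g.degree < (range (m+1)).card := by
    rw [Finset.card_range]
    refine lt_of_le_of_lt g.degree_le_natDegree ?_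
    exact_mod_cast Nat.lt_succ_of_le hdeg
  have hrep := Lagrange.eq_interpolate hinj hdeglt
  set D : ℕ → ℝ := fun j => ((Lagrange.basis (range (m+1)) v j).derivative).eval 0 with hD
  have hgd : g.derivative.eval 0 = ∑ j ∈ range (m+1), g.eval (v j) * D j := by
    conv_lhs => rw [hrep]
    rw [Lagrange.interpolate_apply, derivative_sum, eval_finset_sum]
    apply Finset.sum_congr rfl
    intro j _
    rw [derivative_C_mul, eval_mul, eval_C]
  -- bound for D j, 1 ≤ j ≤ m
  have hDbound : ∀ j ∈ Icc 1 m, |D j| ≤ 2 * (m:ℝ)^2 / (j:ℝ)^2 := by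
    intro j hj
    simp only [mem_Icc] at hj
    have hjmem : j ∈ range (m+1) := by simp; omega
    have h0mem : (0:ℕ) ∈ (range (m+1)).erase j := by
      simp only [Finset.mem_erase, Finset.mem_range]; omega
    have hbasis : Lagrange.basis (range (m+1)) v j
        = Lagrange.basisDivisor (v j) (v 0) * ∏ i ∈ ((range (m+1)).erase j).erase 0,
            Lagrange.basisDivisor (v j) (v i) := by
      rw [Lagrange.basis, ← Finset.mul_prod_erase _ _ h0mem]
    have hv0 : v 0 = 0 := by simp [hv]
    have hbd0 : Lagrange.basisDivisor (v j) (v 0) = C (v j)⁻¹ * X := by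
      rw [hv0, Lagrange.basisDivisor]; simp
    have hDval : D j = (v j)⁻¹ * (∏ i ∈ ((range (m+1)).erase j).erase 0,
        Lagrange.basisDivisor (v j) (v i)).eval 0 := by
      rw [hD]
      simp only
      rw [hbasis, hbd0, mul_assoc, derivative_C_mul, eval_mul, eval_C, derivative_mul,
        derivative_X, one_mul, eval_add, eval_mul, eval_X, zero_mul, add_zero]
    have herase : ((range (m+1)).erase j).erase 0 = (Icc 1 m).erase j := by
      ext i
      simp only [Finset.mem_erase, Finset.mem_range, Finset.mem_Icc]
      omega
    rw [hDval, herase, Polynomial.eval_prod, abs_mul, abs_inv, Finset.abs_prod]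
    have hvj : |v j| = (j:ℝ)^2 / (m:ℝ)^2 := by
      rw [hv]; simp only; rw [abs_of_nonneg]; positivity
    have hfac : ∀ i ∈ (Icc 1 m).erase j,
        |(Lagrange.basisDivisor (v j) (v i)).eval 0| = (i:ℝ)^2 / |(j:ℝ)^2 - (i:ℝ)^2| := by
      intro i hi
      simp only [Finset.mem_erase, Finset.mem_Icc] at hi
      have hij : (i:ℕ) ≠ j := hi.1
      have hne : (j:ℝ)^2 - (i:ℝ)^2 ≠ 0 := by
        intro h
        have : (j:ℝ)^2 = (i:ℝ)^2 := by linarith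
        have : (j^2 : ℕ) = (i^2 : ℕ) := by exact_mod_cast this
        exact hij (Nat.pow_left_injective (by norm_num) this).symm
      rw [Lagrange.basisDivisor]
      simp only [eval_mul, eval_C, eval_sub, eval_X, zero_sub]
      rw [abs_mul, abs_inv, abs_neg]
      rw [hv]
      simp only
      rw [show (j:ℝ)^2/(m:ℝ)^2 - (i:ℝ)^2/(m:ℝ)^2 = ((j:ℝ)^2 - (i:ℝ)^2)/(m:ℝ)^2 by ring]
      rw [abs_div, abs_of_nonneg (le_of_lt hm0), abs_of_nonneg (by positivity : (0:ℝ) ≤ (i:ℝ)^2/(m:ℝ)^2)]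
      have habs : |(j:ℝ)^2 - (i:ℝ)^2| ≠ 0 := abs_ne_zero.2 hne
      field_simp
    rw [hvj, Finset.prod_congr rfl hfac]
    have hjpos : (0:ℝ) < (j:ℝ)^2 := by
      have : (1:ℝ) ≤ (j:ℝ) := by exact_mod_cast hj.1
      positivity
    rw [inv_div]
    calc (m:ℝ)^2/(j:ℝ)^2 * ∏ i ∈ (Icc 1 m).erase j, ((i:ℝ)^2 / |(j:ℝ)^2 - (i:ℝ)^2|)
        ≤ (m:ℝ)^2/(j:ℝ)^2 * 2 := by
          apply mul_le_mul_of_nonneg_left (prod_ratio_le m j hj.1 hj.2) (by positivity)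
      _ = 2 * (m:ℝ)^2 / (j:ℝ)^2 := by ring
  -- total sum bound
  have hsum0 : ∑ j ∈ range (m+1), D j = 0 := by
    have h1 := Lagrange.sum_basis hinj (by simp : (range (m+1)).Nonempty)
    have h2 : ((∑ j ∈ range (m+1), Lagrange.basis (range (m+1)) v j).derivative).eval 0
        = ∑ j ∈ range (m+1), D j := by
      rw [derivative_sum, eval_finset_sum]
    rw [h1] at h2
    simp at h2
    exact h2.symm
  have herase0 : (range (m+1)).erase 0 = Icc 1 m := by
    ext i; simp only [Finset.mem_erase, Finset.mem_range, Finset.mem_Icc]; omega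
  have h0mem' : (0:ℕ) ∈ range (m+1) := by simp
  have hD0 : D 0 = - ∑ j ∈ Icc 1 m, D j := by
    have := Finset.add_sum_erase (range (m+1)) D h0mem'
    rw [herase0] at this
    rw [← this] at hsum0
    linarith
  have hDsum : ∑ j ∈ range (m+1), |D j| ≤ 8 * (m:ℝ)^2 := by
    rw [← Finset.add_sum_erase (range (m+1)) (fun j => |D j|) h0mem', herase0]
    have hpart : ∑ j ∈ Icc 1 m, |D j| ≤ 4 * (m:ℝ)^2 := by
      calc ∑ j ∈ Icc 1 m, |D j| ≤ ∑ j ∈ Icc 1 m, 2 * (m:ℝ)^2 / (j:ℝ)^2 :=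
            Finset.sum_le_sum hDbound
        _ = 2 * (m:ℝ)^2 * ∑ j ∈ Icc 1 m, (1:ℝ)/(j:ℝ)^2 := by
            rw [Finset.mul_sum]; apply Finset.sum_congr rfl; intro j _; ring
        _ ≤ 2 * (m:ℝ)^2 * 2 := by
            apply mul_le_mul_of_nonneg_left (sum_inv_sq_le m) (by positivity)
        _ = 4 * (m:ℝ)^2 := by ring
    have hD0abs : |D 0| ≤ 4 * (m:ℝ)^2 := by
      rw [hD0, abs_neg]
      calc |∑ j ∈ Icc 1 m, D j| ≤ ∑ j ∈ Icc 1 m, |D j| := Finset.abs_sum_le_sum_abs _ _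
        _ ≤ 4 * (m:ℝ)^2 := hpart
    linarith
  -- conclude
  have hMnn : 0 ≤ M := le_trans (abs_nonneg _) (hM 0 (by norm_num))
  rw [hgd]
  calc |∑ j ∈ range (m+1), g.eval (v j) * D j|
      ≤ ∑ j ∈ range (m+1), |g.eval (v j) * D j| := Finset.abs_sum_le_sum_abs _ _
    _ ≤ ∑ j ∈ range (m+1), M * |D j| := by
        apply Finset.sum_le_sum
        intro j hj
        rw [abs_mul]
        apply mul_le_mul_of_nonneg_right _ (abs_nonneg _)
        apply hM
        simp only [Finset.mem_range] at hj
        constructor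
        · positivity
        · rw [hv]
          simp only
          rw [div_le_one hm0]
          have : (j:ℝ) ≤ (m:ℝ) := by exact_mod_cast Nat.lt_succ_iff.1 hj
          nlinarith [Nat.cast_nonneg (α := ℝ) j]
    _ = M * ∑ j ∈ range (m+1), |D j| := by rw [Finset.mul_sum]
    _ ≤ M * (8 * (m:ℝ)^2) := mul_le_mul_of_nonneg_left hDsum hMnn
    _ = 8 * (m:ℝ)^2 * M := by ring

lemma markov_step (m : ℕ) (hm : 1 ≤ m) (P : Polynomial ℝ) (hdeg : P.natDegree ≤ m)
    (hmono : MonotoneOn (fun x => P.eval x) (Set.Icc (0 : ℝ) 1))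
    (h1 : P.eval 1 = 1) (x : ℝ) (hx : x ∈ Set.Ico (0:ℝ) 1) :
    (1 - x) * P.derivative.eval x ≤ 4 * (m:ℝ)^2 * (1 - P.eval x) := by
  obtain ⟨hx0, hx1⟩ := hx
  set q : Polynomial ℝ := C x + C (1-x) * X with hq
  set g : Polynomial ℝ := P.comp q - C ((1 + P.eval x)/2) with hg
  have hqdeg : q.natDegree ≤ 1 := by
    refine le_trans (natDegree_add_le _ _) ?_
    simp only [natDegree_C, max_le_iff]
    refine ⟨Nat.zero_le _, le_trans (natDegree_mul_le) ?_⟩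
    simp [natDegree_C, natDegree_X]
  have hgdeg : g.natDegree ≤ m := by
    refine le_trans (natDegree_sub_le _ _) ?_
    simp only [natDegree_C, max_le_iff]
    refine ⟨le_trans (natDegree_comp_le) ?_, Nat.zero_le _⟩
    calc P.natDegree * q.natDegree ≤ m * 1 := Nat.mul_le_mul hdeg hqdeg
      _ = m := by ring
  have hgeval : ∀ y : ℝ, g.eval y = P.eval (x + (1-x)*y) - (1 + P.eval x)/2 := by
    intro y
    rw [hg, hq]
    simp [eval_comp]
  have hPx1 : P.eval x ≤ 1 := by
    have := hmono (Set.mem_Icc.2 ⟨hx0, le_of_lt hx1⟩) (Set.mem_Icc.2 ⟨zero_le_one, le_refl 1⟩)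
      (le_of_lt hx1)
    simpa [h1] using this
  have hM : ∀ y ∈ Set.Icc (0:ℝ) 1, |g.eval y| ≤ (1 - P.eval x)/2 := by
    intro y hy
    obtain ⟨hy0, hy1⟩ := hy
    rw [hgeval]
    set z := x + (1-x)*y with hz
    have hz1 : z ≤ 1 := by nlinarith
    have hz0 : 0 ≤ z := by nlinarith
    have hxz : x ≤ z := by nlinarith
    have hPz1 : P.eval z ≤ 1 := by
      have := hmono (Set.mem_Icc.2 ⟨hz0, hz1⟩) (Set.mem_Icc.2 ⟨zero_le_one, le_refl 1⟩) hz1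
      simpa [h1] using this
    have hPxz : P.eval x ≤ P.eval z :=
      hmono (Set.mem_Icc.2 ⟨hx0, le_of_lt hx1⟩) (Set.mem_Icc.2 ⟨hz0, hz1⟩) hxz
    rw [abs_le]
    constructor <;> [linarith; linarith]
  have hgd : g.derivative.eval 0 = (1-x) * P.derivative.eval x := by
    rw [hg, hq]
    rw [derivative_sub, derivative_C, sub_zero, derivative_comp]
    simp [eval_comp]
  have := endpoint_markov m hm g hgdeg _ hM
  rw [hgd] at this
  have habs : (1-x) * P.derivative.eval x ≤ |(1-x) * P.derivative.eval x| := le_abs_self _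
  calc (1-x) * P.derivative.eval x ≤ 8 * (m:ℝ)^2 * ((1 - P.eval x)/2) := le_trans habs this
    _ = 4 * (m:ℝ)^2 * (1 - P.eval x) := by ring

/-- A polynomial of degree at most `m ≥ 1`, nondecreasing on `[0,1]`, with `P(0)=0` and
`P(1)=1`, satisfies `P(1/(2m²+1)) ≤ 2m²/(2m²+1)`. -/
theorem stmt1 (m : ℕ) (hm : 1 ≤ m) (P : Polynomial ℝ) (hdeg : P.natDegree ≤ m)
    (hmono : MonotoneOn (fun x => P.eval x) (Set.Icc (0 : ℝ) 1))
    (h0 : P.eval 0 = 0) (h1 : P.eval 1 = 1) :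
    P.eval (1 / (2 * (m : ℝ) ^ 2 + 1)) ≤ 2 * (m : ℝ) ^ 2 / (2 * (m : ℝ) ^ 2 + 1) := by
  rcases eq_or_lt_of_le hm with hm1 | hm2
  · -- m = 1 : P is linear, hence P = X
    have hdeg1 : P.natDegree ≤ 1 := by rw [hm1]; exact hdeg
    have hP : P = C (P.coeff 1) * X + C (P.coeff 0) := eq_X_add_C_of_natDegree_le_one hdeg1
    have hc0 : P.coeff 0 = 0 := by
      have := h0; rw [hP] at this; simpa using this
    have hc1 : P.coeff 1 = 1 := by
      have := h1; rw [hP] at this; simp [hc0] at this; simpa using this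
    rw [hP, hc0, hc1, ← hm1]
    norm_num
  · -- m ≥ 2
    have hm2' : 2 ≤ m := hm2
    have hmr : (2:ℝ) ≤ (m:ℝ) := by exact_mod_cast hm2'
    set c : ℝ := 2 * (m:ℝ)^2 with hc
    have hc8 : (8:ℝ) ≤ c := by rw [hc]; nlinarith
    have hc0 : (0:ℝ) < c := by linarith
    have hc1 : (0:ℝ) < c + 1 := by linarith
    set t : ℝ := 1 / (c + 1) with ht
    have ht0 : 0 < t := by positivity
    have ht1 : t < 1 := by
      rw [ht, div_lt_one hc1]; linarith
    have htle : t ≤ 1/9 := by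
      rw [ht, div_le_div_iff₀ hc1 (by norm_num)]; linarith
    -- P < 1 on [0,1)
    have hPlt1 : ∀ x ∈ Set.Ico (0:ℝ) 1, P.eval x < 1 := by
      intro x hx
      obtain ⟨hx0, hx1⟩ := hx
      have hle : P.eval x ≤ 1 := by
        have := hmono (Set.mem_Icc.2 ⟨hx0, le_of_lt hx1⟩)
          (Set.mem_Icc.2 ⟨zero_le_one, le_refl 1⟩) (le_of_lt hx1)
        simpa [h1] using this
      rcases lt_or_eq_of_le hle with h | h
      · exact h
      · exfalso
        have hall : ∀ y ∈ Set.Icc x 1, P.eval y = 1 := by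
          intro y hy
          obtain ⟨hyx, hy1⟩ := hy
          have hy0 : 0 ≤ y := le_trans hx0 hyx
          have hl : P.eval x ≤ P.eval y :=
            hmono (Set.mem_Icc.2 ⟨hx0, le_of_lt hx1⟩) (Set.mem_Icc.2 ⟨hy0, hy1⟩) hyx
          have hu : P.eval y ≤ 1 := by
            have := hmono (Set.mem_Icc.2 ⟨hy0, hy1⟩)
              (Set.mem_Icc.2 ⟨zero_le_one, le_refl 1⟩) hy1
            simpa [h1] using this
          rw [h] at hl
          linarith
        have hinf : {r : ℝ | (P - 1).IsRoot r}.Infinite := by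
          apply Set.Infinite.mono _ (Set.Icc_infinite hx1)
          intro y hy
          simp only [Set.mem_setOf_eq, IsRoot, eval_sub, eval_one]
          rw [hall y hy]; ring
        have hP1 : P - 1 = 0 := eq_zero_of_infinite_isRoot _ hinf
        have : P = 1 := by linear_combination hP1
        rw [this] at h0
        simp at h0
    set K : ℝ := 4 * (m:ℝ)^2 with hK
    have hKc : K = 2 * c := by rw [hK, hc]; ring
    set f : ℝ → ℝ := fun x => Real.log (1 - P.eval x) - K * Real.log (1 - x) with hf
    -- positivity facts on [0,t]
    have hsub : Set.Icc (0:ℝ) t ⊆ Set.Ico (0:ℝ) 1 := by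
      intro x hx
      exact ⟨hx.1, lt_of_le_of_lt hx.2 ht1⟩
    have hpos1 : ∀ x ∈ Set.Icc (0:ℝ) t, 0 < 1 - P.eval x := by
      intro x hx
      have := hPlt1 x (hsub hx)
      linarith
    have hpos2 : ∀ x ∈ Set.Icc (0:ℝ) t, 0 < 1 - x := by
      intro x hx
      have := lt_of_le_of_lt hx.2 ht1
      linarith
    -- derivative of f at interior points
    have hderiv : ∀ x ∈ Set.Ioo (0:ℝ) t, HasDerivAt f
        (-(P.derivative.eval x) / (1 - P.eval x) - K * (-1 / (1 - x))) x := by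
      intro x hx
      have hxm : x ∈ Set.Icc (0:ℝ) t := ⟨le_of_lt hx.1, le_of_lt hx.2⟩
      have h1p : (1:ℝ) - P.eval x ≠ 0 := ne_of_gt (hpos1 x hxm)
      have h1x : (1:ℝ) - x ≠ 0 := ne_of_gt (hpos2 x hxm)
      have hd1 : HasDerivAt (fun y => 1 - P.eval y) (-(P.derivative.eval x)) x := by
        simpa using (P.hasDerivAt x).const_sub 1
      have hd2 : HasDerivAt (fun y => Real.log (1 - P.eval y))
          (-(P.derivative.eval x) / (1 - P.eval x)) x := hd1.log h1p
      have hd3 : HasDerivAt (fun y : ℝ => 1 - y) (-1) x := by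
        simpa using (hasDerivAt_id x).const_sub 1
      have hd4 : HasDerivAt (fun y => Real.log (1 - y)) (-1 / (1 - x)) x := hd3.log h1x
      exact hd2.sub (hd4.const_mul K)
    -- f is monotone on [0,t]
    have hmonof : MonotoneOn f (Set.Icc 0 t) := by
      apply monotoneOn_of_deriv_nonneg (convex_Icc 0 t)
      · -- continuity
        apply ContinuousOn.sub
        · apply ContinuousOn.log
          · exact (continuous_const.sub P.continuous).continuousOn
          · intro x hx; exact ne_of_gt (hpos1 x hx)
        · apply ContinuousOn.mul continuousOn_const
          apply ContinuousOn.log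
          · exact continuousOn_const.sub continuousOn_id
          · intro x hx; exact ne_of_gt (hpos2 x hx)
      · intro x hx
        rw [interior_Icc] at hx
        exact (hderiv x hx).differentiableAt.differentiableWithinAt
      · intro x hx
        rw [interior_Icc] at hx
        rw [(hderiv x hx).deriv]
        have hxm : x ∈ Set.Icc (0:ℝ) t := ⟨le_of_lt hx.1, le_of_lt hx.2⟩
        have hp1 := hpos1 x hxm
        have hp2 := hpos2 x hxm
        have hms := markov_step m hm P hdeg hmono h1 x (hsub hxm)
        have heq : -(P.derivative.eval x) / (1 - P.eval x) - K * (-1 / (1 - x))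
            = (K * (1 - P.eval x) - (1-x) * P.derivative.eval x) / ((1 - P.eval x) * (1-x)) := by
          field_simp
          ring
        rw [heq]
        apply div_nonneg _ (le_of_lt (mul_pos hp1 hp2))
        rw [hK]
        linarith
    -- conclude: f 0 ≤ f t
    have hft2 : 0 ≤ Real.log (1 - P.eval t) - K * Real.log (1 - t) := by
      have := hmonof (Set.mem_Icc.2 ⟨le_refl 0, le_of_lt ht0⟩)
        (Set.mem_Icc.2 ⟨le_of_lt ht0, le_refl t⟩) (le_of_lt ht0)
      simpa [hf, h0] using this
    have hlog1 : K * Real.log (1 - t) ≤ Real.log (1 - P.eval t) := by linarith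
    -- numeric part : log t ≤ K * log (1 - t)
    have h1t : 1 - t = c / (c + 1) := by
      rw [ht]; field_simp; ring
    have hlogt : Real.log t = - Real.log (c+1) := by
      rw [ht, one_div, Real.log_inv]
    have hlog1t : Real.log (1 - t) = Real.log c - Real.log (c+1) := by
      rw [h1t, Real.log_div (ne_of_gt hc0) (ne_of_gt hc1)]
    have hlograt : Real.log (c+1) - Real.log c ≤ 1 / c := by
      have h := Real.log_le_sub_one_of_pos (show (0:ℝ) < (c+1)/c by positivity)
      rw [Real.log_div (ne_of_gt hc1) (ne_of_gt hc0)] at h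
      have : (c+1)/c - 1 = 1/c := by field_simp; ring
      linarith [h.trans_eq this]
    have hlogc1 : (2:ℝ) ≤ Real.log (c+1) := by
      rw [Real.le_log_iff_exp_le hc1]
      have he : Real.exp 1 < 3 := by
        have := Real.exp_one_lt_d9
        linarith
      have : Real.exp 2 = Real.exp 1 * Real.exp 1 := by
        rw [← Real.exp_add]; norm_num
      nlinarith [Real.exp_pos 1]
    have hnum : Real.log t ≤ K * Real.log (1 - t) := by
      rw [hlogt, hlog1t]
      have : K * (Real.log (c+1) - Real.log c) ≤ Real.log (c+1) := by
        calc K * (Real.log (c+1) - Real.log c) ≤ K * (1/c) :=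
              mul_le_mul_of_nonneg_left hlograt (by rw [hK]; positivity)
          _ = 2 := by rw [hKc]; field_simp
          _ ≤ Real.log (c+1) := hlogc1
      nlinarith [this]
    -- combine
    have hfinal : Real.log t ≤ Real.log (1 - P.eval t) := le_trans hnum hlog1
    have htmem : t ∈ Set.Icc (0:ℝ) t := Set.mem_Icc.2 ⟨le_of_lt ht0, le_refl t⟩
    have hPt : 0 < 1 - P.eval t := hpos1 t htmem
    have := (Real.log_le_log_iff ht0 hPt).1 hfinal
    have hgoal : P.eval t ≤ 1 - t := by linarith
    have h1t' : 1 - t = 2 * (m:ℝ)^2 / (2 * (m:ℝ)^2 + 1) := by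
      rw [h1t, hc]
    rw [ht, hc] at hgoal
    linarith [hgoal, h1t'.symm.le]
end

section
/- Let f : [a,b] → ℝ be a nondecreasing continuous function, p ≥ 1 a real number, and (fₙ) a sequence of nondecreasing functions on [a,b] such that ‖fₙ - f‖_p → 0 (convergence in L^p norm). If (xₙ) is a sequence in [a,b] with xₙ → a and fₙ(xₙ) ≥ f(xₙ) for all n, then fₙ(xₙ) → f(a) and f(xₙ) → f(a). -/
open MeasureTheory Filter

/-- If nondecreasing `fₙ` converge to a continuous nondecreasing `f` in the `Lᵖ` norm on `[a,b]`,
`xₙ → a` with `fₙ(xₙ) ≥ f(xₙ)`, then `fₙ(xₙ) → f(a)` and `f(xₙ) → f(a)`. -/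
theorem stmt2 (a b : ℝ) (hab : a < b) (p : ℝ) (hp : 1 ≤ p)
    (f : ℝ → ℝ) (hf_cont : ContinuousOn f (Set.Icc a b))
    (hf_mono : MonotoneOn f (Set.Icc a b))
    (F : ℕ → ℝ → ℝ) (hF_mono : ∀ n, MonotoneOn (F n) (Set.Icc a b))
    (hF_int : ∀ n, IntervalIntegrable (fun x => |F n x - f x| ^ p) volume a b)
    (hLp : Tendsto (fun n => (∫ x in a..b, |F n x - f x| ^ p) ^ (1 / p)) atTop (nhds 0))
    (x : ℕ → ℝ) (hx_mem : ∀ n, x n ∈ Set.Icc a b)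
    (hx_lim : Tendsto x atTop (nhds a))
    (hge : ∀ n, f (x n) ≤ F n (x n)) :
    Tendsto (fun n => F n (x n)) atTop (nhds (f a)) ∧
      Tendsto (fun n => f (x n)) atTop (nhds (f a)) := by
  have hp0 : (0:ℝ) < p := lt_of_lt_of_le one_pos hp
  have ha : a ∈ Set.Icc a b := ⟨le_refl a, le_of_lt hab⟩
  have hx' : Tendsto x atTop (nhdsWithin a (Set.Icc a b)) :=
    tendsto_nhdsWithin_of_tendsto_nhds_of_eventually_within x hx_lim
      (Eventually.of_forall hx_mem)
  have hfx : Tendsto (fun n => f (x n)) atTop (nhds (f a)) :=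
    (hf_cont a ha).tendsto.comp hx'
  refine ⟨?_, hfx⟩
  -- the integral itself tends to 0
  have hnn : ∀ n, (0:ℝ) ≤ ∫ y in a..b, |F n y - f y| ^ p := fun n =>
    intervalIntegral.integral_nonneg (le_of_lt hab)
      (fun y _ => Real.rpow_nonneg (abs_nonneg _) p)
  have hI0 : Tendsto (fun n => ∫ y in a..b, |F n y - f y| ^ p) atTop (nhds 0) := by
    have h := (Real.continuousAt_rpow_const 0 p (Or.inr (le_of_lt hp0))).tendsto.comp hLp
    rw [Real.zero_rpow (ne_of_gt hp0)] at h
    have heq : ∀ n, ((∫ y in a..b, |F n y - f y| ^ p) ^ (1/p)) ^ p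
        = ∫ y in a..b, |F n y - f y| ^ p := by
      intro n
      rw [← Real.rpow_mul (hnn n), one_div_mul_cancel (ne_of_gt hp0), Real.rpow_one]
    exact h.congr heq
  -- upper bound eventually
  have upper : ∀ ε > (0:ℝ), ∀ᶠ n in atTop, F n (x n) < f a + ε := by
    intro ε hε
    obtain ⟨δ, hδ, hδf⟩ := Metric.continuousWithinAt_iff.mp (hf_cont a ha) (ε/2) (by linarith)
    set c := min (a + δ/2) b with hc
    have hac : a < c := lt_min (by linarith) hab
    have hcb : c ≤ b := min_le_right _ _
    have hfc : f c < f a + ε/2 := by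
      have hd : dist c a < δ := by
        rw [Real.dist_eq, abs_of_pos (by linarith)]
        have : c ≤ a + δ/2 := min_le_left _ _
        linarith
      have := hδf ⟨le_of_lt hac, hcb⟩ hd
      rw [Real.dist_eq] at this
      have := abs_lt.mp this
      linarith [this.1, this.2]
    set m := (a + c)/2 with hm
    have ham : a < m := by rw [hm]; linarith
    have hmc : m < c := by rw [hm]; linarith
    have hK : (0:ℝ) < (c - m) * (ε/2)^p :=
      mul_pos (by linarith) (Real.rpow_pos_of_pos (by linarith) p)
    have h1 : ∀ᶠ n in atTop, x n < m := hx_lim.eventually_lt_const ham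
    have h2 : ∀ᶠ n in atTop, (∫ y in a..b, |F n y - f y| ^ p) < (c - m) * (ε/2)^p :=
      hI0.eventually_lt_const hK
    filter_upwards [h1, h2] with n hn1 hn2
    by_contra hcon
    push_neg at hcon
    have hint : ∀ y ∈ Set.Icc m c, (ε/2 : ℝ)^p ≤ |F n y - f y| ^ p := by
      intro y hy
      have hymem : y ∈ Set.Icc a b := ⟨by linarith [hy.1], le_trans hy.2 hcb⟩
      have hxy : x n ≤ y := le_trans (le_of_lt hn1) hy.1
      have h2' : f a + ε ≤ F n y := le_trans hcon (hF_mono n (hx_mem n) hymem hxy)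
      have h3 : f y ≤ f c := hf_mono hymem ⟨le_of_lt hac, hcb⟩ hy.2
      have h4 : ε/2 ≤ F n y - f y := by linarith
      calc (ε/2:ℝ)^p ≤ (F n y - f y)^p :=
            Real.rpow_le_rpow (by linarith) h4 (le_of_lt hp0)
        _ ≤ |F n y - f y|^p :=
            Real.rpow_le_rpow (by linarith) (le_abs_self _) (le_of_lt hp0)
    have hInt1 : IntervalIntegrable (fun y => |F n y - f y| ^ p) volume m c :=
      (hF_int n).mono_set (by
        rw [Set.uIcc_of_le (le_of_lt hmc), Set.uIcc_of_le (le_of_lt hab)]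
        exact Set.Icc_subset_Icc (le_of_lt ham) hcb)
    have step1 : (c - m) * (ε/2)^p ≤ ∫ y in m..c, |F n y - f y| ^ p := by
      have := intervalIntegral.integral_mono_on (le_of_lt hmc)
        intervalIntegrable_const hInt1 hint
      simpa [smul_eq_mul] using this
    have step2 : (∫ y in m..c, |F n y - f y| ^ p) ≤ ∫ y in a..b, |F n y - f y| ^ p :=
      intervalIntegral.integral_mono_interval (le_of_lt ham) (le_of_lt hmc) hcb
        (ae_of_all _ fun y => Real.rpow_nonneg (abs_nonneg _) p) (hF_int n)
    linarith
  rw [Metric.tendsto_atTop]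
  intro ε hε
  have hup := upper ε hε
  have hlow : ∀ᶠ n in atTop, f a - ε < f (x n) := hfx.eventually_const_lt (by linarith)
  obtain ⟨N, hN⟩ := eventually_atTop.mp (hup.and hlow)
  refine ⟨N, fun n hn => ?_⟩
  obtain ⟨hn1, hn2⟩ := hN n hn
  rw [Real.dist_eq, abs_sub_lt_iff]
  constructor
  · linarith
  · linarith [hge n]
end

section
/- Let f : [a,b] → ℝ be a nondecreasing continuous function, p ≥ 1, and (fₙ) a sequence of nondecreasing functions on [a,b] with ‖fₙ - f‖_p → 0. If fₙ(a) ≥ f(a) for all n, then fₙ(a) → f(a). -/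
open MeasureTheory Filter

/-- If nondecreasing `fₙ` converge to a continuous nondecreasing `f` in the `Lᵖ` norm on `[a,b]`
and `fₙ(a) ≥ f(a)` for all `n`, then `fₙ(a) → f(a)`. -/
theorem stmt3 (a b : ℝ) (hab : a < b) (p : ℝ) (hp : 1 ≤ p)
    (f : ℝ → ℝ) (hf_cont : ContinuousOn f (Set.Icc a b))
    (hf_mono : MonotoneOn f (Set.Icc a b))
    (F : ℕ → ℝ → ℝ) (hF_mono : ∀ n, MonotoneOn (F n) (Set.Icc a b))
    (hF_int : ∀ n, IntervalIntegrable (fun x => |F n x - f x| ^ p) volume a b)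
    (hLp : Tendsto (fun n => (∫ x in a..b, |F n x - f x| ^ p) ^ (1 / p)) atTop (nhds 0))
    (hge : ∀ n, f a ≤ F n a) :
    Tendsto (fun n => F n a) atTop (nhds (f a)) := by
  have hp0 : 0 < p := lt_of_lt_of_le one_pos hp
  set I : ℕ → ℝ := fun n => ∫ x in a..b, |F n x - f x| ^ p with hI
  have hInonneg : ∀ n, 0 ≤ I n := by
    intro n
    apply intervalIntegral.integral_nonneg hab.le
    intro x _
    exact Real.rpow_nonneg (abs_nonneg _) p
  -- I tends to 0
  have hItends : Tendsto I atTop (nhds 0) := by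
    have h2 : Tendsto (fun n => ((I n) ^ (1/p)) ^ p) atTop (nhds 0) := by
      have := hLp.rpow_const (p := p) (Or.inr hp0.le)
      simpa [Real.zero_rpow hp0.ne'] using this
    have heq : ∀ n, ((I n) ^ (1/p)) ^ p = I n := by
      intro n
      rw [← Real.rpow_mul (hInonneg n), one_div, inv_mul_cancel₀ hp0.ne', Real.rpow_one]
    exact Tendsto.congr heq h2
  rw [Metric.tendsto_atTop]
  intro ε hε
  -- continuity of f at a
  have hca : ContinuousWithinAt f (Set.Icc a b) a :=
    hf_cont a (Set.mem_Icc.2 ⟨le_refl a, hab.le⟩)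
  rw [Metric.continuousWithinAt_iff] at hca
  obtain ⟨δ, hδ0, hδ⟩ := hca (ε/2) (by positivity)
  set c : ℝ := min b (a + δ/2) with hc
  have hac : a < c := lt_min hab (by linarith)
  have hcb : c ≤ b := min_le_left _ _
  -- key: if F n a ≥ f a + ε then I n ≥ (ε/2)^p * (c-a)
  have hkey : ∀ n, f a + ε ≤ F n a → (ε/2) ^ p * (c - a) ≤ I n := by
    intro n hn
    have hint_c : IntervalIntegrable (fun x => |F n x - f x| ^ p) volume a c :=
      (hF_int n).mono_set (by
        rw [Set.uIcc_of_le hac.le, Set.uIcc_of_le hab.le]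
        exact Set.Icc_subset_Icc le_rfl hcb)
    have h1 : (ε/2) ^ p * (c - a) ≤ ∫ x in a..c, |F n x - f x| ^ p := by
      have : ∫ x in a..c, (ε/2) ^ p ≤ ∫ x in a..c, |F n x - f x| ^ p := by
        apply intervalIntegral.integral_mono_on hac.le intervalIntegrable_const hint_c
        intro x hx
        have hxab : x ∈ Set.Icc a b := ⟨hx.1, le_trans hx.2 hcb⟩
        have hFx : f a + ε ≤ F n x :=
          le_trans hn (hF_mono n ⟨le_rfl, hab.le⟩ hxab hx.1)
        have hfx : f x < f a + ε/2 := by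
          have hd : dist x a < δ := by
            rw [Real.dist_eq, abs_of_nonneg (by linarith [hx.1])]
            have : x ≤ a + δ/2 := le_trans hx.2 (min_le_right _ _)
            linarith
          have := hδ hxab hd
          rw [Real.dist_eq] at this
          have := abs_lt.1 this
          linarith [this.1]
        have hdiff : ε/2 ≤ F n x - f x := by linarith
        have : ε/2 ≤ |F n x - f x| := le_trans hdiff (le_abs_self _)
        exact Real.rpow_le_rpow (by positivity) this hp0.le
      rwa [intervalIntegral.integral_const, smul_eq_mul, mul_comm] at this
    have h2 : ∫ x in a..c, |F n x - f x| ^ p ≤ I n := by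
      apply intervalIntegral.integral_mono_interval le_rfl hac.le hcb
      · filter_upwards with x using Real.rpow_nonneg (abs_nonneg _) p
      · exact hF_int n
    linarith
  -- conclude
  have hpos : 0 < (ε/2) ^ p * (c - a) := by
    apply mul_pos (Real.rpow_pos_of_pos (by positivity) p) (by linarith)
  obtain ⟨N, hN⟩ := (Metric.tendsto_atTop.1 hItends) ((ε/2) ^ p * (c - a)) hpos
  refine ⟨N, fun n hn => ?_⟩
  have hIlt : I n < (ε/2) ^ p * (c - a) := by
    have := hN n hn
    rw [Real.dist_eq, sub_zero, abs_of_nonneg (hInonneg n)] at this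
    exact this
  have hFlt : F n a < f a + ε := by
    by_contra h
    push_neg at h
    exact absurd (hkey n h) (not_le.2 hIlt)
  rw [Real.dist_eq, abs_of_nonneg (by linarith [hge n])]
  linarith [hge n]
end

section
/- Let f be a real continuous function on a finite open interval (a,b), and let (fₙ) be a sequence of nondecreasing functions on (a,b) such that ∫_a^b |fₙ - f|^p → 0 for some 1 ≤ p < ∞. Then for any c, d with a < c < d < b, the sequence (fₙ) converges uniformly to f on [c,d]. -/
open MeasureTheory Filter

lemma aux_int (g : ℝ → ℝ) {a b u v K : ℝ} (hau : a ≤ u) (huv : u ≤ v) (hvb : v ≤ b)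
    (hg : IntervalIntegrable g volume a b)
    (h0 : ∀ x ∈ Set.Icc a b, 0 ≤ g x)
    (hK : ∀ x ∈ Set.Icc u v, K ≤ g x) :
    (v - u) * K ≤ ∫ x in a..b, g x := by
  have hab : a ≤ b := hau.trans (huv.trans hvb)
  have hguv : IntervalIntegrable g volume u v :=
    hg.mono_set (by rw [Set.uIcc_of_le huv, Set.uIcc_of_le hab]; exact Set.Icc_subset_Icc hau hvb)
  have h1 : (v - u) * K = ∫ _x in u..v, K := by
    rw [intervalIntegral.integral_const, smul_eq_mul]
  rw [h1]
  have h2 : (∫ _x in u..v, K) ≤ ∫ x in u..v, g x :=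
    intervalIntegral.integral_mono_on huv intervalIntegrable_const hguv hK
  refine h2.trans ?_
  apply intervalIntegral.integral_mono_interval hau huv hvb ?_ hg
  filter_upwards [ae_restrict_mem measurableSet_Ioc] with x hx
  exact h0 x (Set.Ioc_subset_Icc_self hx)

/-- Lewis–Shisha: if nondecreasing functions `fₙ` on `(a,b)` converge in the `Lᵖ` norm to a
continuous function `f`, then `fₙ → f` uniformly on every `[c,d]` with `a < c < d < b`. -/
theorem stmt4 (a b : ℝ) (hab : a < b) (p : ℝ) (hp : 1 ≤ p)
    (f : ℝ → ℝ) (hf_cont : ContinuousOn f (Set.Ioo a b))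
    (F : ℕ → ℝ → ℝ) (hF_mono : ∀ n, MonotoneOn (F n) (Set.Ioo a b))
    (hF_int : ∀ n, IntervalIntegrable (fun x => |F n x - f x| ^ p) volume a b)
    (hLp : Tendsto (fun n => ∫ x in a..b, |F n x - f x| ^ p) atTop (nhds 0)) :
    ∀ c d : ℝ, a < c → c < d → d < b →
      TendstoUniformlyOn F f atTop (Set.Icc c d) := by
  intro c d hac hcd hdb
  rw [Metric.tendstoUniformlyOn_iff]
  intro ε hε
  have hac' : a < (a + c) / 2 := by linarith
  have hc'c : (a + c) / 2 < c := by linarith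
  have hdd' : d < (d + b) / 2 := by linarith
  have hd'b : (d + b) / 2 < b := by linarith
  have hsub : Set.Icc ((a + c) / 2) ((d + b) / 2) ⊆ Set.Ioo a b := fun x hx =>
    ⟨lt_of_lt_of_le hac' hx.1, lt_of_le_of_lt hx.2 hd'b⟩
  have hunif : UniformContinuousOn f (Set.Icc ((a + c) / 2) ((d + b) / 2)) :=
    isCompact_Icc.uniformContinuousOn_of_continuous (hf_cont.mono hsub)
  rw [Metric.uniformContinuousOn_iff] at hunif
  obtain ⟨δ, hδ, hδf⟩ := hunif (ε / 2) (by linarith)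
  set δ₀ := min (δ / 2) (min ((c - a) / 2) ((b - d) / 2)) with hδ₀def
  have hδ₀ : 0 < δ₀ := by
    apply lt_min (by linarith) (lt_min (by linarith) (by linarith))
  have hδ₀δ : δ₀ < δ := lt_of_le_of_lt (min_le_left _ _) (by linarith)
  have hδ₀c : δ₀ ≤ (c - a) / 2 := le_trans (min_le_right _ _) (min_le_left _ _)
  have hδ₀d : δ₀ ≤ (b - d) / 2 := le_trans (min_le_right _ _) (min_le_right _ _)
  have hKpos : 0 < δ₀ * (ε / 2) ^ p :=
    mul_pos hδ₀ (Real.rpow_pos_of_pos (by linarith) p)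
  filter_upwards [hLp.eventually_lt_const hKpos] with n hn x hx
  by_contra hcon
  push_neg at hcon
  rw [Real.dist_eq] at hcon
  have hg0 : ∀ t ∈ Set.Icc a b, 0 ≤ |F n t - f t| ^ p := fun t _ =>
    Real.rpow_nonneg (abs_nonneg _) p
  have hxmem : x ∈ Set.Icc ((a + c) / 2) ((d + b) / 2) :=
    ⟨le_trans hc'c.le hx.1, le_trans hx.2 hdd'.le⟩
  -- pointwise bound on rpow
  have key : ∀ t : ℝ, ε / 2 ≤ |F n t - f t| → (ε / 2) ^ p ≤ |F n t - f t| ^ p := fun t ht =>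
    Real.rpow_le_rpow (by linarith) ht (by linarith)
  rcases le_abs.mp hcon with h1 | h2
  · -- f x - F n x ≥ ε : use [x - δ₀, x]
    have hbound : ∀ t ∈ Set.Icc (x - δ₀) x, (ε / 2) ^ p ≤ |F n t - f t| ^ p := by
      intro t ht
      have htmem : t ∈ Set.Icc ((a + c) / 2) ((d + b) / 2) :=
        ⟨by have := hx.1; linarith [ht.1, hδ₀c], le_trans ht.2 hxmem.2⟩
      have hmono : F n t ≤ F n x := hF_mono n (hsub htmem) (hsub hxmem) ht.2
      have hfc : dist (f t) (f x) < ε / 2 := by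
        apply hδf t htmem x hxmem
        rw [Real.dist_eq, abs_sub_lt_iff]
        constructor <;> [linarith [ht.2]; linarith [ht.1, hδ₀δ]]
      rw [Real.dist_eq, abs_sub_lt_iff] at hfc
      apply key
      have : ε / 2 ≤ f t - F n t := by linarith [hfc.1, hfc.2]
      calc ε / 2 ≤ f t - F n t := this
        _ ≤ |f t - F n t| := le_abs_self _
        _ = |F n t - f t| := abs_sub_comm _ _
    have := aux_int (fun t => |F n t - f t| ^ p)
      (by linarith [hx.1, hδ₀c] : a ≤ x - δ₀) (by linarith : x - δ₀ ≤ x)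
      (by linarith [hx.2] : x ≤ b) (hF_int n) hg0 hbound
    rw [show x - (x - δ₀) = δ₀ by ring] at this
    linarith
  · -- F n x - f x ≥ ε : use [x, x + δ₀]
    have h2' : ε ≤ F n x - f x := by linarith
    have hbound : ∀ t ∈ Set.Icc x (x + δ₀), (ε / 2) ^ p ≤ |F n t - f t| ^ p := by
      intro t ht
      have htmem : t ∈ Set.Icc ((a + c) / 2) ((d + b) / 2) :=
        ⟨le_trans hxmem.1 ht.1, by have := hx.2; linarith [ht.2, hδ₀d]⟩
      have hmono : F n x ≤ F n t := hF_mono n (hsub hxmem) (hsub htmem) ht.1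
      have hfc : dist (f t) (f x) < ε / 2 := by
        apply hδf t htmem x hxmem
        rw [Real.dist_eq, abs_sub_lt_iff]
        constructor <;> [linarith [ht.2, hδ₀δ]; linarith [ht.1]]
      rw [Real.dist_eq, abs_sub_lt_iff] at hfc
      apply key
      have : ε / 2 ≤ F n t - f t := by linarith [hfc.1, hfc.2]
      calc ε / 2 ≤ F n t - f t := this
        _ ≤ |F n t - f t| := le_abs_self _
    have := aux_int (fun t => |F n t - f t| ^ p)
      (by linarith [hx.1] : a ≤ x) (by linarith : x ≤ x + δ₀)
      (by linarith [hx.2, hδ₀d] : x + δ₀ ≤ b) (hF_int n) hg0 hbound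
    rw [show x + δ₀ - x = δ₀ by ring] at this
    linarith
end

section
/- Let f : [a,b] → ℝ be a continuous nondecreasing function and (fₙ) a sequence of nondecreasing functions on [a,b] such that for some p ≥ 1, ‖fₙ - f‖_p → 0. If additionally fₙ(a) → f(a) and fₙ(b) → f(b), then fₙ converges to f uniformly on [a,b], i.e. sup_{x ∈ [a,b]} |fₙ(x) - f(x)| → 0. -/
open MeasureTheory Filter

/-- Lower bound for an integral of a nonnegative function that is at least `c` on a
subinterval `[x, y]` of `[a, b]`. -/
lemma key_lower_bound (a b x y c : ℝ) (hx : a ≤ x) (hxy : x ≤ y) (hyb : y ≤ b)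
    (g : ℝ → ℝ) (hg_int : IntervalIntegrable g volume a b)
    (hg_nonneg : ∀ t, 0 ≤ g t) (hlow : ∀ t ∈ Set.Icc x y, c ≤ g t) :
    c * (y - x) ≤ ∫ t in a..b, g t := by
  have h1 : IntervalIntegrable g volume x y :=
    hg_int.mono_set (by
      rw [Set.uIcc_of_le hxy, Set.uIcc_of_le (hx.trans (hxy.trans hyb))]
      exact Set.Icc_subset_Icc hx hyb)
  have h2 : c * (y - x) ≤ ∫ t in x..y, g t := by
    have := intervalIntegral.integral_mono_on hxy (intervalIntegrable_const (c := c)) h1 hlow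
    simpa [mul_comm] using this
  refine h2.trans ?_
  exact intervalIntegral.integral_mono_interval hx hxy hyb
    (Filter.Eventually.of_forall fun t => hg_nonneg t) hg_int

/-- (Bogachev, Lemma 4.3.) If nondecreasing `fₙ` converge to a continuous nondecreasing `f`
in the `Lᵖ` norm on `[a,b]` and moreover `fₙ(a) → f(a)` and `fₙ(b) → f(b)`, then `fₙ → f`
uniformly on `[a,b]`. -/
theorem stmt5 (a b : ℝ) (hab : a < b) (p : ℝ) (hp : 1 ≤ p)
    (f : ℝ → ℝ) (hf_cont : ContinuousOn f (Set.Icc a b))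
    (hf_mono : MonotoneOn f (Set.Icc a b))
    (F : ℕ → ℝ → ℝ) (hF_mono : ∀ n, MonotoneOn (F n) (Set.Icc a b))
    (hF_int : ∀ n, IntervalIntegrable (fun x => |F n x - f x| ^ p) volume a b)
    (hLp : Tendsto (fun n => (∫ x in a..b, |F n x - f x| ^ p) ^ (1 / p)) atTop (nhds 0))
    (ha : Tendsto (fun n => F n a) atTop (nhds (f a)))
    (hb : Tendsto (fun n => F n b) atTop (nhds (f b))) :
    TendstoUniformlyOn F f atTop (Set.Icc a b) := by
  have hp0 : 0 < p := lt_of_lt_of_le one_pos hp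
  set I : ℕ → ℝ := fun n => ∫ x in a..b, |F n x - f x| ^ p with hI_def
  have hI_nonneg : ∀ n, 0 ≤ I n := fun n =>
    intervalIntegral.integral_nonneg hab.le fun u _ => Real.rpow_nonneg (abs_nonneg _) p
  -- The integral itself tends to 0.
  have hI_tendsto : Tendsto I atTop (nhds 0) := by
    have hcont : ContinuousAt (fun t : ℝ => t ^ p) 0 :=
      Real.continuousAt_rpow_const 0 p (Or.inr hp0.le)
    have h := (hcont.tendsto.comp hLp)
    rw [Real.zero_rpow hp0.ne'] at h
    refine h.congr fun n => ?_
    simp only [Function.comp]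
    rw [← Real.rpow_mul (hI_nonneg n), one_div, inv_mul_cancel₀ hp0.ne', Real.rpow_one]
  -- Uniform continuity of f
  have hUC : UniformContinuousOn f (Set.Icc a b) :=
    isCompact_Icc.uniformContinuousOn_of_continuous hf_cont
  rw [Metric.tendstoUniformlyOn_iff]
  intro ε hε
  obtain ⟨δ', hδ'pos, hδ'⟩ := (Metric.uniformContinuousOn_iff.mp hUC) (ε / 2) (half_pos hε)
  set δ : ℝ := δ' / 2 with hδ_def
  have hδpos : 0 < δ := half_pos hδ'pos
  have hUCle : ∀ u ∈ Set.Icc a b, ∀ v ∈ Set.Icc a b, |u - v| ≤ δ → |f u - f v| < ε / 2 := by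
    intro u hu v hv huv
    have : dist u v < δ' := by
      rw [Real.dist_eq]; exact lt_of_le_of_lt huv (by linarith)
    simpa [Real.dist_eq] using hδ' u hu v hv this
  have hcpos : 0 < (ε / 2) ^ p * (δ / 2) :=
    mul_pos (Real.rpow_pos_of_pos (half_pos hε) p) (half_pos hδpos)
  have hev1 : ∀ᶠ n in atTop, I n < (ε / 2) ^ p * (δ / 2) :=
    hI_tendsto.eventually_lt_const hcpos
  have hev2 : ∀ᶠ n in atTop, |F n b - f b| < ε / 2 := by
    have := hb.eventually (Metric.ball_mem_nhds (f b) (half_pos hε))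
    simpa [Metric.mem_ball, Real.dist_eq] using this
  have hev3 : ∀ᶠ n in atTop, |F n a - f a| < ε / 2 := by
    have := ha.eventually (Metric.ball_mem_nhds (f a) (half_pos hε))
    simpa [Metric.mem_ball, Real.dist_eq] using this
  filter_upwards [hev1, hev2, hev3] with n h1 h2 h3
  intro x hx
  obtain ⟨hax, hxb⟩ := hx
  rw [Real.dist_eq]
  rw [abs_sub_lt_iff]
  constructor
  · -- f x - F n x < ε : rule out F n x ≤ f x - ε
    by_contra hcon
    push_neg at hcon
    have hFx : F n x ≤ f x - ε := by linarith
    by_cases hcase : x < a + δ / 2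
    · -- x close to a: contradiction with h3
      have hfa : |f x - f a| < ε / 2 := by
        refine hUCle x ⟨hax, hxb⟩ a ⟨le_refl a, hab.le⟩ ?_
        rw [abs_of_nonneg (by linarith)]; linarith
      have : F n a ≤ F n x := hF_mono n ⟨le_refl a, hab.le⟩ ⟨hax, hxb⟩ hax
      have : F n a - f a < -(ε / 2) := by
        have h4 : f x - f a < ε / 2 := lt_of_le_of_lt (le_abs_self _) hfa
        linarith
      have := neg_lt_of_abs_lt h3
      linarith
    · -- interval [x - δ/2, x] ⊆ [a,b], integrand big there
      push_neg at hcase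
      set y : ℝ := x - δ / 2 with hy_def
      have hay : a ≤ y := by simp only [hy_def]; linarith
      have hyx : y ≤ x := by simp only [hy_def]; linarith
      have hlow : ∀ t ∈ Set.Icc y x, (ε / 2) ^ p ≤ |F n t - f t| ^ p := by
        intro t ⟨hyt, htx⟩
        have htmem : t ∈ Set.Icc a b := ⟨hay.trans hyt, htx.trans hxb⟩
        have hft : |f t - f x| < ε / 2 := by
          refine hUCle t htmem x ⟨hax, hxb⟩ ?_
          rw [abs_of_nonpos (by linarith)]
          simp only [hy_def] at hyt; linarith
        have hFt : F n t ≤ F n x := hF_mono n htmem ⟨hax, hxb⟩ htx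
        have hgap : ε / 2 ≤ f t - F n t := by
          have h4 : f x - f t < ε / 2 := by
            have := neg_lt_of_abs_lt hft; linarith
          linarith
        have : ε / 2 ≤ |F n t - f t| := le_trans hgap (by rw [abs_sub_comm]; exact le_abs_self _)
        exact Real.rpow_le_rpow (by linarith) this hp0.le
      have hkey := key_lower_bound a b y x ((ε / 2) ^ p) hay hyx hxb _
        (hF_int n) (fun t => Real.rpow_nonneg (abs_nonneg _) p) hlow
      have hxy : x - y = δ / 2 := by simp only [hy_def]; ring
      rw [hxy] at hkey
      exact absurd (lt_of_le_of_lt hkey h1) (lt_irrefl _)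
  · -- F n x - f x < ε : rule out F n x ≥ f x + ε
    by_contra hcon
    push_neg at hcon
    have hFx : f x + ε ≤ F n x := by linarith
    by_cases hcase : b - δ / 2 < x
    · -- x close to b: contradiction with h2
      have hfb : |f b - f x| < ε / 2 := by
        refine hUCle b ⟨hab.le, le_refl b⟩ x ⟨hax, hxb⟩ ?_
        rw [abs_of_nonneg (by linarith)]; linarith
      have hmono : F n x ≤ F n b := hF_mono n ⟨hax, hxb⟩ ⟨hab.le, le_refl b⟩ hxb
      have : ε / 2 < F n b - f b := by
        have h4 : f b - f x < ε / 2 := lt_of_le_of_lt (le_abs_self _) hfb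
        linarith
      have := lt_of_abs_lt h2
      linarith
    · push_neg at hcase
      set y : ℝ := x + δ / 2 with hy_def
      have hxy : x ≤ y := by simp only [hy_def]; linarith
      have hyb : y ≤ b := by simp only [hy_def]; linarith
      have hlow : ∀ t ∈ Set.Icc x y, (ε / 2) ^ p ≤ |F n t - f t| ^ p := by
        intro t ⟨hxt, hty⟩
        have htmem : t ∈ Set.Icc a b := ⟨hax.trans hxt, hty.trans hyb⟩
        have hft : |f t - f x| < ε / 2 := by
          refine hUCle t htmem x ⟨hax, hxb⟩ ?_
          rw [abs_of_nonneg (by linarith)]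
          simp only [hy_def] at hty; linarith
        have hFt : F n x ≤ F n t := hF_mono n ⟨hax, hxb⟩ htmem hxt
        have hgap : ε / 2 ≤ F n t - f t := by
          have h4 : f t - f x < ε / 2 := lt_of_le_of_lt (le_abs_self _) hft
          linarith
        have : ε / 2 ≤ |F n t - f t| := le_trans hgap (le_abs_self _)
        exact Real.rpow_le_rpow (by linarith) this hp0.le
      have hkey := key_lower_bound a b x y ((ε / 2) ^ p) hax hxy hyb _
        (hF_int n) (fun t => Real.rpow_nonneg (abs_nonneg _) p) hlow
      have hyx : y - x = δ / 2 := by simp only [hy_def]; ring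
      rw [hyx] at hkey
      exact absurd (lt_of_le_of_lt hkey h1) (lt_irrefl _)
end

section
/- Let f : [a,b] → ℝ be continuous and nondecreasing, Δₙ a partition of [a,b] with norm ‖Δₙ‖, p ∈ [1,∞), and suppose there exists a nondecreasing Δₙ-piecewise polynomial P of order m interpolating f at the knots of Δₙ. Then the best L^p approximation SI of f in the class of nondecreasing Δₙ-piecewise polynomials of order m (of a given smoothness class containing P) satisfies ‖f - SI‖_p ≤ (b-a)^{1/p} · ω_f(‖Δₙ‖). -/
open MeasureTheory

/-- The modulus of uniform continuity of `f` on `[a,b]`. -/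
noncomputable def modulus (f : ℝ → ℝ) (a b δ : ℝ) : ℝ :=
  sSup {v : ℝ | ∃ x ∈ Set.Icc a b, ∃ y ∈ Set.Icc a b, |x - y| ≤ δ ∧ v = |f x - f y|}

/-- `g` is a `Δ`-piecewise polynomial of degree `≤ m` for the partition `α 0 < ... < α k`. -/
def IsPiecewisePoly (α : ℕ → ℝ) (k m : ℕ) (g : ℝ → ℝ) : Prop :=
  ∀ i < k, ∃ q : Polynomial ℝ, q.natDegree ≤ m ∧
    ∀ x ∈ Set.Icc (α i) (α (i + 1)), g x = q.eval x

lemma alpha_mono (α : ℕ → ℝ) (k : ℕ) (hαinc : ∀ i < k, α i < α (i + 1)) :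
    ∀ j ≤ k, ∀ i ≤ j, α i ≤ α j := by
  intro j
  induction j with
  | zero =>
    intro _ i hi
    have : i = 0 := Nat.le_zero.1 hi
    subst this; rfl
  | succ n ih =>
    intro hjk i hi
    rcases Nat.lt_or_ge i (n+1) with h | h
    · exact le_trans (ih (by omega) i (by omega)) (hαinc n (by omega)).le
    · have : i = n + 1 := by omega
      subst this; rfl

lemma exists_piece (α : ℕ → ℝ) (x : ℝ) (h1 : α 0 ≤ x) :
    ∀ k, 1 ≤ k → (∀ i < k, α i < α (i + 1)) → x ≤ α k →
      ∃ i < k, α i ≤ x ∧ x ≤ α (i + 1) := by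
  intro k
  induction k with
  | zero => omega
  | succ n ih =>
    intro _ hαinc h2
    by_cases hn : n = 0
    · subst hn; exact ⟨0, by omega, h1, h2⟩
    · by_cases hx : x ≤ α n
      · obtain ⟨i, hi, h⟩ := ih (by omega) (fun i hi => hαinc i (by omega)) hx
        exact ⟨i, by omega, h⟩
      · exact ⟨n, by omega, (not_le.1 hx).le, h2⟩

/-- If the approximating class `S` (e.g. nondecreasing `Δ`-piecewise polynomials of degree `≤ m`
in a given smoothness class) contains a nondecreasing piecewise polynomial `P` interpolating the
continuous nondecreasing `f` at the knots, then the best `Lᵖ` approximation `SI` of `f` in `S`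
satisfies `‖f - SI‖ₚ ≤ (b-a)^(1/p) · ω_f(‖Δₙ‖)`. -/
theorem stmt8 (a b : ℝ) (hab : a < b) (p : ℝ) (hp : 1 ≤ p)
    (f : ℝ → ℝ) (hf_cont : ContinuousOn f (Set.Icc a b))
    (hf_mono : MonotoneOn f (Set.Icc a b))
    (k : ℕ) (hk : 1 ≤ k) (α : ℕ → ℝ) (hα0 : α 0 = a) (hαk : α k = b)
    (hαinc : ∀ i < k, α i < α (i + 1))
    (normΔ : ℝ) (hnorm : ∀ i < k, α (i + 1) - α i ≤ normΔ)
    (m : ℕ) (S : Set (ℝ → ℝ))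
    (P : ℝ → ℝ) (hPS : P ∈ S) (hP_mono : MonotoneOn P (Set.Icc a b))
    (hP_pp : IsPiecewisePoly α k m P)
    (hP_interp : ∀ i ≤ k, P (α i) = f (α i))
    (SI : ℝ → ℝ) (hSIS : SI ∈ S)
    (hbest : ∀ g ∈ S, (∫ x in a..b, |f x - SI x| ^ p) ^ (1 / p) ≤
      (∫ x in a..b, |f x - g x| ^ p) ^ (1 / p)) :
    (∫ x in a..b, |f x - SI x| ^ p) ^ (1 / p) ≤ (b - a) ^ (1 / p) * modulus f a b normΔ := by
  set ω := modulus f a b normΔ with hωdef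
  have hp0 : (0:ℝ) < p := lt_of_lt_of_le one_pos hp
  -- bound for f on [a,b]
  obtain ⟨M, hM⟩ := isCompact_Icc.exists_bound_of_continuousOn hf_cont
  -- the set defining the modulus is bounded above
  have hbdd : BddAbove {v : ℝ | ∃ x ∈ Set.Icc a b, ∃ y ∈ Set.Icc a b,
      |x - y| ≤ normΔ ∧ v = |f x - f y|} := by
    refine ⟨2 * M, ?_⟩
    rintro v ⟨x, hx, y, hy, -, rfl⟩
    calc |f x - f y| ≤ |f x| + |f y| := abs_sub _ _
      _ ≤ M + M := add_le_add (hM x hx) (hM y hy)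
      _ = 2 * M := by ring
  -- normΔ is nonneg
  have hnorm0 : 0 ≤ normΔ := by
    have h1 := hαinc 0 hk
    have h2 := hnorm 0 hk
    linarith
  have haIcc : a ∈ Set.Icc a b := Set.left_mem_Icc.2 hab.le
  -- ω ≥ 0
  have hω0 : 0 ≤ ω := by
    refine le_csSup hbdd ⟨a, haIcc, a, haIcc, by simpa using hnorm0, by simp⟩
  -- monotonicity of knots, knots in [a,b]
  have hαmem : ∀ i ≤ k, α i ∈ Set.Icc a b := by
    intro i hi
    constructor
    · rw [← hα0]; exact alpha_mono α k hαinc i hi 0 (Nat.zero_le _)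
    · rw [← hαk]; exact alpha_mono α k hαinc k le_rfl i hi
  -- pointwise bound
  have hpt : ∀ x ∈ Set.Icc a b, |f x - P x| ≤ ω := by
    intro x hx
    obtain ⟨i, hik, hix, hxi⟩ := exists_piece α x (by rw [hα0]; exact hx.1) k hk hαinc
      (by rw [hαk]; exact hx.2)
    have hi1 : i + 1 ≤ k := hik
    have hαi := hαmem i (le_of_lt hik)
    have hαi1 := hαmem (i+1) hi1
    have hfle : f (α i) ≤ f x := hf_mono hαi hx hix
    have hfge : f x ≤ f (α (i+1)) := hf_mono hx hαi1 hxi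
    have hPle : f (α i) ≤ P x := by
      rw [← hP_interp i (le_of_lt hik)]; exact hP_mono hαi hx hix
    have hPge : P x ≤ f (α (i+1)) := by
      rw [← hP_interp (i+1) hi1]; exact hP_mono hx hαi1 hxi
    have h1 : |f x - P x| ≤ f (α (i+1)) - f (α i) := abs_le.mpr ⟨by linarith, by linarith⟩
    refine le_trans h1 (le_csSup hbdd ⟨α (i+1), hαi1, α i, hαi, ?_, ?_⟩)
    · rw [abs_of_nonneg (by linarith [hαinc i hik])]
      exact hnorm i hik
    · rw [abs_of_nonneg (by linarith)]
  -- bound the integral against P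
  have hPint : (∫ x in a..b, |f x - P x| ^ p) ≤ (b - a) * ω ^ p := by
    by_cases hint : IntervalIntegrable (fun x => |f x - P x| ^ p) volume a b
    · have := intervalIntegral.integral_mono_on hab.le hint
        (intervalIntegrable_const (c := ω ^ p))
        (fun x hx => Real.rpow_le_rpow (abs_nonneg _) (hpt x hx) hp0.le)
      simpa [mul_comm] using this
    · rw [intervalIntegral.integral_undef hint]
      exact mul_nonneg (by linarith) (Real.rpow_nonneg hω0 p)
  have hSInn : 0 ≤ ∫ x in a..b, |f x - P x| ^ p :=
    intervalIntegral.integral_nonneg hab.le fun x _ => Real.rpow_nonneg (abs_nonneg _) p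
  calc (∫ x in a..b, |f x - SI x| ^ p) ^ (1 / p)
      ≤ (∫ x in a..b, |f x - P x| ^ p) ^ (1 / p) := hbest P hPS
    _ ≤ ((b - a) * ω ^ p) ^ (1 / p) :=
        Real.rpow_le_rpow hSInn hPint (by positivity)
    _ = (b - a) ^ (1 / p) * ω := by
        rw [Real.mul_rpow (by linarith) (Real.rpow_nonneg hω0 p),
          ← Real.rpow_mul hω0, mul_one_div, div_self (ne_of_gt hp0), Real.rpow_one]
end

section
/- Let f : [a,b] → ℝ be continuous and nondecreasing, and (Δₙ) a sequence of partitions of [a,b] with ‖Δₙ‖ → 0. For integers l ≥ 0 and m ≥ 2l+1 and real p ∈ [1,∞), let SIₙ denote the best L^p approximation of f in the cone of nondecreasing Δₙ-piecewise polynomials of degree ≤ m belonging to C^l[a,b]. Then ‖f - SIₙ‖_p → 0 as n → ∞. -/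
open MeasureTheory Filter

/-- The cone of nondecreasing `Δ`-piecewise polynomials of degree `≤ m` of class `C^l` on
`[a,b]`, for the partition `α 0 < α 1 < ... < α k`. -/
def SIcone (a b : ℝ) (α : ℕ → ℝ) (k m l : ℕ) : Set (ℝ → ℝ) :=
  {g | MonotoneOn g (Set.Icc a b) ∧ ContDiffOn ℝ (l : ℕ∞) g (Set.Icc a b) ∧
    ∀ i < k, ∃ q : Polynomial ℝ, q.natDegree ≤ m ∧
      ∀ x ∈ Set.Icc (α i) (α (i + 1)), g x = q.eval x}

section SmoothStepAux

open Polynomial Set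

/-- truncated power derivative -/
lemma truncPow_hasDerivAt (n : ℕ) (x : ℝ) :
    HasDerivAt (fun x : ℝ => max x 0 ^ (n + 2)) ((n + 2) * max x 0 ^ (n + 1)) x := by
  have key : ∀ y : ℝ, y ≠ 0 →
      HasDerivAt (fun x : ℝ => max x 0 ^ (n + 2)) ((n + 2) * max y 0 ^ (n + 1)) y := by
    intro y hy
    rcases lt_or_gt_of_ne hy with hlt | hgt
    · have h0 : HasDerivAt (fun _ : ℝ => (0:ℝ)) 0 y := hasDerivAt_const _ _
      have : (fun x : ℝ => max x 0 ^ (n + 2)) =ᶠ[nhds y] fun _ => (0:ℝ) := by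
        filter_upwards [Iio_mem_nhds hlt] with z hz
        simp [max_eq_right (le_of_lt (mem_Iio.mp hz))]
      simpa [max_eq_right (le_of_lt hlt)] using h0.congr_of_eventuallyEq this
    · have h0 : HasDerivAt (fun x : ℝ => x ^ (n + 2)) ((n + 2) * y ^ (n + 1)) y := by
        simpa using hasDerivAt_pow (n + 2) y
      have : (fun x : ℝ => max x 0 ^ (n + 2)) =ᶠ[nhds y] fun x => x ^ (n + 2) := by
        filter_upwards [Ioi_mem_nhds hgt] with z hz
        simp [max_eq_left (le_of_lt (mem_Ioi.mp hz))]
      simpa [max_eq_left (le_of_lt hgt)] using h0.congr_of_eventuallyEq this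
  rcases eq_or_ne x 0 with rfl | hx
  · have := hasDerivAt_of_hasDerivAt_of_ne
      (f := fun x : ℝ => max x 0 ^ (n + 2)) (g := fun x : ℝ => (n + 2) * max x 0 ^ (n + 1))
      key (by fun_prop) (by fun_prop)
    simpa using this
  · exact key x hx

lemma truncPow_contDiff (n : ℕ) :
    ContDiff ℝ (n : ℕ∞) (fun x : ℝ => max x 0 ^ (n + 1)) := by
  induction n with
  | zero =>
    have : ((0 : ℕ) : ℕ∞) = (0 : ℕ∞) := by norm_cast
    rw [this]
    rw [show (((0:ℕ∞)) : WithTop ℕ∞) = 0 from rfl, contDiff_zero]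
    fun_prop
  | succ j ih =>
    have hcast : (((j + 1 : ℕ) : ℕ∞) : WithTop ℕ∞) = (j : ℕ∞) + 1 := by
      push_cast; ring
    rw [hcast, contDiff_succ_iff_deriv]
    refine ⟨?_, ?_, ?_⟩
    · intro x
      exact (truncPow_hasDerivAt j x).differentiableAt
    · intro h
      exfalso
      exact (by simp : ((j : ℕ∞) : WithTop ℕ∞) ≠ ⊤) h
    · have hd : deriv (fun x : ℝ => max x 0 ^ (j + 1 + 1)) =
          fun x : ℝ => (j + 2) * max x 0 ^ (j + 1) := by
        funext x
        simpa using (truncPow_hasDerivAt j x).deriv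
      rw [show (j + 1 + 1) = j + 2 from rfl, hd]
      exact contDiff_const.mul ih

noncomputable def stepD (l : ℕ) : Polynomial ℝ := (X * (1 - X)) ^ l

noncomputable def stepP0 (l : ℕ) : Polynomial ℝ :=
  (stepD l).sum fun n a => C (a / (n + 1)) * X ^ (n + 1)

lemma stepP0_derivative (l : ℕ) : (stepP0 l).derivative = stepD l := by
  unfold stepP0
  rw [Polynomial.sum_def, map_sum]
  have : ∀ n ∈ (stepD l).support,
      derivative (C ((stepD l).coeff n / (n + 1)) * X ^ (n + 1)) =
        C ((stepD l).coeff n) * X ^ n := by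
    intro n _
    rw [derivative_C_mul_X_pow]
    congr 1
    push_cast
    have : (n : ℝ) + 1 ≠ 0 := by positivity
    field_simp
  rw [Finset.sum_congr rfl this]
  exact (Polynomial.as_sum_support_C_mul_X_pow _).symm

lemma stepP0_eval_zero (l : ℕ) : (stepP0 l).eval 0 = 0 := by
  unfold stepP0
  rw [Polynomial.sum_def, eval_finset_sum]
  simp

lemma stepP0_natDegree_le (l : ℕ) : (stepP0 l).natDegree ≤ 2 * l + 1 := by
  unfold stepP0
  rw [Polynomial.sum_def]
  apply Polynomial.natDegree_sum_le_of_forall_le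
  intro n hn
  calc (C ((stepD l).coeff n / (n+1)) * X ^ (n+1)).natDegree
      ≤ (X ^ (n+1) : Polynomial ℝ).natDegree := natDegree_C_mul_le _ _
    _ ≤ n + 1 := by simp
    _ ≤ 2 * l + 1 := by
        have h1 : n ≤ (stepD l).natDegree := le_natDegree_of_mem_supp n hn
        have h2 : (stepD l).natDegree ≤ 2 * l := by
          unfold stepD
          calc ((X * (1 - X) : Polynomial ℝ) ^ l).natDegree
              ≤ l * (X * (1 - X) : Polynomial ℝ).natDegree := natDegree_pow_le
            _ ≤ l * 2 := by
                apply Nat.mul_le_mul_left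
                calc (X * (1 - X) : Polynomial ℝ).natDegree
                    ≤ (X : Polynomial ℝ).natDegree + (1 - X : Polynomial ℝ).natDegree :=
                      natDegree_mul_le
                  _ ≤ 1 + 1 := by
                      gcongr
                      · exact natDegree_X_le
                      · calc (1 - X : Polynomial ℝ).natDegree ≤
                            max (1 : Polynomial ℝ).natDegree (X : Polynomial ℝ).natDegree :=
                            natDegree_sub_le _ _
                        _ ≤ 1 := by simp [natDegree_X_le]
                  _ = 2 := rfl
            _ = 2 * l := by ring
        omega

lemma stepD_eval (l : ℕ) (t : ℝ) : (stepD l).eval t = (t * (1 - t)) ^ l := by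
  simp [stepD]

lemma stepP0_eval_one_pos (l : ℕ) : 0 < (stepP0 l).eval 1 := by
  have hderiv : ∀ t ∈ Set.uIcc (0:ℝ) 1, HasDerivAt (fun t => (stepP0 l).eval t)
      ((stepD l).eval t) t := by
    intro t _
    have := (stepP0 l).hasDerivAt t
    rwa [stepP0_derivative] at this
  have hint : IntervalIntegrable (fun t => (stepD l).eval t) MeasureTheory.volume 0 1 :=
    ((stepD l).continuous).intervalIntegrable 0 1
  have hftc : ∫ t in (0:ℝ)..1, (stepD l).eval t = (stepP0 l).eval 1 - (stepP0 l).eval 0 :=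
    intervalIntegral.integral_eq_sub_of_hasDerivAt hderiv hint
  rw [stepP0_eval_zero, sub_zero] at hftc
  rw [← hftc]
  apply intervalIntegral.intervalIntegral_pos_of_pos_on hint
  · intro x hx
    rw [stepD_eval]
    exact pow_pos (mul_pos hx.1 (by linarith [hx.2])) l
  · norm_num

noncomputable def stepP (l : ℕ) : Polynomial ℝ := C ((stepP0 l).eval 1)⁻¹ * stepP0 l

lemma stepP_natDegree_le (l : ℕ) : (stepP l).natDegree ≤ 2 * l + 1 :=
  le_trans (natDegree_C_mul_le _ _) (stepP0_natDegree_le l)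

lemma stepP_eval_zero (l : ℕ) : (stepP l).eval 0 = 0 := by
  simp [stepP, stepP0_eval_zero]

lemma stepP_eval_one (l : ℕ) : (stepP l).eval 1 = 1 := by
  simp [stepP]
  exact inv_mul_cancel₀ (ne_of_gt (stepP0_eval_one_pos l))

lemma stepP_deriv_eval (l : ℕ) (t : ℝ) :
    ((stepP l).derivative).eval t = ((stepP0 l).eval 1)⁻¹ * (t * (1 - t)) ^ l := by
  rw [stepP, derivative_C_mul, eval_mul, eval_C, stepP0_derivative, stepD_eval]

lemma stepP_hasDerivAt (l : ℕ) (t : ℝ) :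
    HasDerivAt (fun t => (stepP l).eval t) (((stepP0 l).eval 1)⁻¹ * (t * (1 - t)) ^ l) t := by
  have := (stepP l).hasDerivAt t
  rwa [stepP_deriv_eval] at this

lemma stepP_monotoneOn (l : ℕ) : MonotoneOn (fun t => (stepP l).eval t) (Icc (0:ℝ) 1) := by
  apply monotoneOn_of_deriv_nonneg (convex_Icc 0 1) ((stepP l).continuous.continuousOn)
  · intro t _
    exact ((stepP l).hasDerivAt t).differentiableAt.differentiableWithinAt
  · intro t ht
    rw [interior_Icc] at ht
    rw [(stepP_hasDerivAt l t).deriv]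
    have h1 : (0:ℝ) < ((stepP0 l).eval 1)⁻¹ := inv_pos.mpr (stepP0_eval_one_pos l)
    have h2 : (0:ℝ) < t * (1 - t) := mul_pos ht.1 (by linarith [ht.2])
    positivity

noncomputable def Phi (l : ℕ) (t : ℝ) : ℝ := (stepP l).eval (max (min t 1) 0)

lemma Phi_of_nonpos (l : ℕ) {t : ℝ} (ht : t ≤ 0) : Phi l t = 0 := by
  have h1 : min t 1 = t := min_eq_left (le_trans ht zero_le_one)
  rw [Phi, h1, max_eq_right ht, stepP_eval_zero]

lemma Phi_of_one_le (l : ℕ) {t : ℝ} (ht : 1 ≤ t) : Phi l t = 1 := by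
  have h1 : min t 1 = 1 := min_eq_right ht
  rw [Phi, h1, max_eq_left zero_le_one, stepP_eval_one]

lemma Phi_of_mem (l : ℕ) {t : ℝ} (h0 : 0 ≤ t) (h1 : t ≤ 1) : Phi l t = (stepP l).eval t := by
  rw [Phi, min_eq_left h1, max_eq_left h0]

lemma clamp_mem (t : ℝ) : max (min t 1) 0 ∈ Icc (0:ℝ) 1 :=
  ⟨le_max_right _ _, max_le (min_le_right _ _) zero_le_one⟩

lemma Phi_monotone (l : ℕ) : Monotone (Phi l) := by
  intro s t hst
  exact stepP_monotoneOn l (clamp_mem s) (clamp_mem t)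
    (max_le_max (min_le_min_right _ hst) le_rfl)

lemma Phi_continuous (l : ℕ) : Continuous (Phi l) := by
  apply (stepP l).continuous.comp
  fun_prop

/-- auxiliary: `stepP` evaluated at `max t 0` -/
noncomputable def PhiL (l : ℕ) (t : ℝ) : ℝ := (stepP l).eval (max t 0)

noncomputable def psi (l : ℕ) (t : ℝ) : ℝ :=
  ((stepP0 l).eval 1)⁻¹ * (max t 0 ^ l * max (1 - t) 0 ^ l)

lemma psi_continuous (l : ℕ) : Continuous (psi l) := by unfold psi; fun_prop

lemma PhiL_hasDerivAt {l : ℕ} (hl : 1 ≤ l) (t : ℝ) :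
    HasDerivAt (PhiL l) (((stepP0 l).eval 1)⁻¹ * (max t 0 ^ l * (1 - t) ^ l)) t := by
  have key : ∀ y : ℝ, y ≠ 0 → HasDerivAt (PhiL l)
      (((stepP0 l).eval 1)⁻¹ * (max y 0 ^ l * (1 - y) ^ l)) y := by
    intro y hy
    rcases lt_or_gt_of_ne hy with hlt | hgt
    · have heq : PhiL l =ᶠ[nhds y] fun _ => (stepP l).eval 0 := by
        filter_upwards [Iio_mem_nhds hlt] with z hz
        rw [PhiL, max_eq_right (le_of_lt (mem_Iio.mp hz))]
      have h0 : HasDerivAt (PhiL l) 0 y :=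
        (hasDerivAt_const y ((stepP l).eval 0)).congr_of_eventuallyEq heq
      have : max y 0 = 0 := max_eq_right (le_of_lt hlt)
      rw [this, zero_pow (by omega), zero_mul, mul_zero]
      exact h0
    · have heq : PhiL l =ᶠ[nhds y] fun t => (stepP l).eval t := by
        filter_upwards [Ioi_mem_nhds hgt] with z hz
        rw [PhiL, max_eq_left (le_of_lt (mem_Ioi.mp hz))]
      have h0 := (stepP_hasDerivAt l y).congr_of_eventuallyEq heq
      have : max y 0 = y := max_eq_left (le_of_lt hgt)
      rw [this, ← mul_pow]
      exact h0
  rcases eq_or_ne t 0 with rfl | ht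
  · have cg : ContinuousAt
        (fun y : ℝ => ((stepP0 l).eval 1)⁻¹ * (max y 0 ^ l * (1 - y) ^ l)) 0 := by fun_prop
    have cf : ContinuousAt (PhiL l) 0 := by
      apply (stepP l).continuous.continuousAt.comp
      fun_prop
    exact hasDerivAt_of_hasDerivAt_of_ne key cf cg
  · exact key t ht

lemma Phi_hasDerivAt {l : ℕ} (hl : 1 ≤ l) (t : ℝ) : HasDerivAt (Phi l) (psi l t) t := by
  have hPhiL : ∀ t : ℝ, Phi l t = PhiL l (min t 1) := by
    intro t
    rw [Phi, PhiL]
  have key : ∀ y : ℝ, y ≠ 1 → HasDerivAt (Phi l) (psi l y) y := by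
    intro y hy
    rcases lt_or_gt_of_ne hy with hlt | hgt
    · have heq : Phi l =ᶠ[nhds y] PhiL l := by
        filter_upwards [Iio_mem_nhds hlt] with z hz
        rw [hPhiL, min_eq_left (le_of_lt (mem_Iio.mp hz))]
      have h0 := (PhiL_hasDerivAt hl y).congr_of_eventuallyEq heq
      have : max (1 - y) 0 = 1 - y := max_eq_left (by linarith)
      rw [psi, this]
      exact h0
    · have heq : Phi l =ᶠ[nhds y] fun _ => PhiL l 1 := by
        filter_upwards [Ioi_mem_nhds hgt] with z hz
        rw [hPhiL, min_eq_right (le_of_lt (mem_Ioi.mp hz))]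
      have h0 : HasDerivAt (Phi l) 0 y :=
        (hasDerivAt_const y (PhiL l 1)).congr_of_eventuallyEq heq
      have : max (1 - y) 0 = 0 := max_eq_right (by linarith)
      rw [psi, this, zero_pow (by omega), mul_zero, mul_zero]
      exact h0
  rcases eq_or_ne t 1 with rfl | ht
  · exact hasDerivAt_of_hasDerivAt_of_ne key (Phi_continuous l).continuousAt
      (psi_continuous l).continuousAt
  · exact key t ht

lemma Phi_contDiff (l : ℕ) : ContDiff ℝ (l : ℕ∞) (Phi l) := by
  rcases Nat.eq_zero_or_pos l with rfl | hl
  · have : ((0 : ℕ) : ℕ∞) = (0 : ℕ∞) := by norm_cast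
    rw [this, show (((0:ℕ∞)) : WithTop ℕ∞) = 0 from rfl, contDiff_zero]
    exact Phi_continuous 0
  · obtain ⟨j, rfl⟩ : ∃ j, l = j + 1 := ⟨l - 1, by omega⟩
    have hcast : (((j + 1 : ℕ) : ℕ∞) : WithTop ℕ∞) = (j : ℕ∞) + 1 := by push_cast; ring
    rw [hcast, contDiff_succ_iff_deriv]
    refine ⟨fun x => (Phi_hasDerivAt (by omega) x).differentiableAt, ?_, ?_⟩
    · intro h
      exfalso
      exact (by simp : ((j : ℕ∞) : WithTop ℕ∞) ≠ ⊤) h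
    · have hd : deriv (Phi (j+1)) = psi (j+1) := by
        funext x
        exact (Phi_hasDerivAt (by omega) x).deriv
      rw [hd]
      unfold psi
      have h2 := (truncPow_contDiff j).comp
        (contDiff_const.sub contDiff_id : ContDiff ℝ (j:ℕ∞) (fun x : ℝ => 1 - x))
      exact contDiff_const.mul ((truncPow_contDiff j).mul h2)

lemma partition_mono {K : ℕ} {β : ℕ → ℝ} (hinc : ∀ i < K, β i < β (i+1)) :
    ∀ i j, i ≤ j → j ≤ K → β i ≤ β j := by
  intro i j hij hjK
  induction j with
  | zero =>
    have : i = 0 := by omega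
    simp [this]
  | succ j ih =>
    rcases Nat.eq_or_lt_of_le hij with rfl | h
    · exact le_rfl
    · exact le_trans (ih (by omega) (by omega)) (le_of_lt (hinc j (by omega)))

lemma find_interval : ∀ (K : ℕ) (β : ℕ → ℝ) (x : ℝ), 1 ≤ K → β 0 ≤ x → x ≤ β K →
    ∃ i < K, β i ≤ x ∧ x ≤ β (i+1) := by
  intro K
  induction K with
  | zero => omega
  | succ K ih =>
    intro β x _ h0 hK2
    rcases Nat.eq_zero_or_pos K with rfl | hK'
    · exact ⟨0, by omega, h0, hK2⟩
    · by_cases hx : x ≤ β K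
      · obtain ⟨i, hi, h⟩ := ih β x hK' h0 hx
        exact ⟨i, by omega, h⟩
      · exact ⟨K, by omega, le_of_not_ge hx, hK2⟩

end SmoothStepAux

/-- If `f` is continuous and nondecreasing on `[a,b]`, `(Δₙ)` is a sequence of partitions with
mesh tending to `0`, `m ≥ 2l+1` and `p ∈ [1,∞)`, then the best `Lᵖ` approximations `SIₙ` of `f`
among nondecreasing `Δₙ`-piecewise polynomials of degree `≤ m` in `C^l[a,b]` converge to `f`
in the `Lᵖ` norm. -/
theorem stmt9 (a b : ℝ) (hab : a < b) (p : ℝ) (hp : 1 ≤ p)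
    (f : ℝ → ℝ) (hf_cont : ContinuousOn f (Set.Icc a b))
    (hf_mono : MonotoneOn f (Set.Icc a b))
    (l m : ℕ) (hm : 2 * l + 1 ≤ m)
    (k : ℕ → ℕ) (hk : ∀ n, 1 ≤ k n) (α : ℕ → ℕ → ℝ)
    (hα0 : ∀ n, α n 0 = a) (hαk : ∀ n, α n (k n) = b)
    (hαinc : ∀ n, ∀ i < k n, α n i < α n (i + 1))
    (d : ℕ → ℝ) (hd : ∀ n, ∀ i < k n, α n (i + 1) - α n i ≤ d n)
    (hmesh : Tendsto d atTop (nhds 0))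
    (SI : ℕ → ℝ → ℝ)
    (hSI_mem : ∀ n, SI n ∈ SIcone a b (α n) (k n) m l)
    (hSI_best : ∀ n, ∀ g ∈ SIcone a b (α n) (k n) m l,
      (∫ x in a..b, |f x - SI n x| ^ p) ^ (1 / p) ≤
        (∫ x in a..b, |f x - g x| ^ p) ^ (1 / p)) :
    Tendsto (fun n => (∫ x in a..b, |f x - SI n x| ^ p) ^ (1 / p)) atTop (nhds 0) := by
  classical
  have hp0 : (0:ℝ) < p := lt_of_lt_of_le one_pos hp
  set Cb : ℝ := (b - a) ^ (1/p) with hCbdef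
  have hCb0 : 0 ≤ Cb := Real.rpow_nonneg (by linarith) _
  -- uniform continuity of f on [a,b]
  have hunif : UniformContinuousOn f (Set.Icc a b) :=
    (isCompact_Icc).uniformContinuousOn_of_continuous hf_cont
  rw [Metric.tendsto_atTop]
  intro ε hε
  set ε₁ : ℝ := ε / (2 * (Cb + 1)) with hε₁def
  have hε₁ : 0 < ε₁ := by positivity
  obtain ⟨δ, hδ, hδspec⟩ := (Metric.uniformContinuousOn_iff).mp hunif ε₁ hε₁
  obtain ⟨N, hN⟩ := (Metric.tendsto_atTop).mp hmesh δ hδ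
  refine ⟨N, fun n hn => ?_⟩
  -- facts about the partition
  have hβmono : ∀ i j, i ≤ j → j ≤ k n → α n i ≤ α n j := partition_mono (hαinc n)
  have hβmem : ∀ i ≤ k n, α n i ∈ Set.Icc a b := by
    intro i hi
    constructor
    · rw [← hα0 n]; exact hβmono 0 i (by omega) hi
    · rw [← hαk n]; exact hβmono i (k n) hi le_rfl
  have hpos : ∀ i < k n, 0 < α n (i+1) - α n i := fun i hi => sub_pos.mpr (hαinc n i hi)
  have hjump0 : ∀ i < k n, 0 ≤ f (α n (i+1)) - f (α n i) := by
    intro i hi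
    exact sub_nonneg.mpr (hf_mono (hβmem i (by omega)) (hβmem (i+1) (by omega))
      (le_of_lt (hαinc n i hi)))
  have hjump_small : ∀ i < k n, f (α n (i+1)) - f (α n i) ≤ ε₁ := by
    intro i hi
    have hdist : dist (α n (i+1)) (α n i) < δ := by
      rw [Real.dist_eq, abs_of_nonneg (le_of_lt (sub_pos.mpr (hαinc n i hi)))]
      calc α n (i+1) - α n i ≤ d n := hd n i hi
        _ ≤ |d n| := le_abs_self _
        _ = dist (d n) 0 := by rw [Real.dist_eq, sub_zero]
        _ < δ := hN n hn
    have := hδspec (α n (i+1)) (hβmem (i+1) (by omega)) (α n i) (hβmem i (by omega)) hdist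
    rw [Real.dist_eq] at this
    exact le_of_lt (lt_of_le_of_lt (le_abs_self _) this)
  -- the candidate function
  set g : ℝ → ℝ := fun x => f a + ∑ i ∈ Finset.range (k n),
    (f (α n (i+1)) - f (α n i)) * Phi l ((x - α n i) / (α n (i+1) - α n i)) with hgdef
  -- evaluation of g on each subinterval
  have hgeval : ∀ i < k n, ∀ x, α n i ≤ x → x ≤ α n (i+1) →
      g x = f (α n i) + (f (α n (i+1)) - f (α n i)) *
        (stepP l).eval ((x - α n i) / (α n (i+1) - α n i)) := by
    intro i hi x hx1 hx2
    have hsplit : ∑ j ∈ Finset.range (k n),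
        (f (α n (j+1)) - f (α n j)) * Phi l ((x - α n j) / (α n (j+1) - α n j)) =
        (∑ j ∈ Finset.range (i+1),
          (f (α n (j+1)) - f (α n j)) * Phi l ((x - α n j) / (α n (j+1) - α n j))) +
        (∑ j ∈ Finset.Ico (i+1) (k n),
          (f (α n (j+1)) - f (α n j)) * Phi l ((x - α n j) / (α n (j+1) - α n j))) := by
      rw [Finset.range_eq_Ico, ← Finset.sum_Ico_consecutive _ (Nat.zero_le (i+1)) hi,
        ← Finset.range_eq_Ico]
    have htail : ∑ j ∈ Finset.Ico (i+1) (k n),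
        (f (α n (j+1)) - f (α n j)) * Phi l ((x - α n j) / (α n (j+1) - α n j)) = 0 := by
      apply Finset.sum_eq_zero
      intro j hj
      rw [Finset.mem_Ico] at hj
      have hxle : x ≤ α n j := le_trans hx2 (hβmono (i+1) j hj.1 (by omega))
      have harg : (x - α n j) / (α n (j+1) - α n j) ≤ 0 :=
        div_nonpos_of_nonpos_of_nonneg (by linarith) (le_of_lt (hpos j hj.2))
      rw [Phi_of_nonpos l harg, mul_zero]
    have hhead : ∑ j ∈ Finset.range i,
        (f (α n (j+1)) - f (α n j)) * Phi l ((x - α n j) / (α n (j+1) - α n j)) =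
        f (α n i) - f (α n 0) := by
      rw [show f (α n i) - f (α n 0) =
          ∑ j ∈ Finset.range i, (f (α n (j+1)) - f (α n j)) from
        (Finset.sum_range_sub (fun j => f (α n j)) i).symm]
      apply Finset.sum_congr rfl
      intro j hj
      rw [Finset.mem_range] at hj
      have hj2 : j < k n := by omega
      have hxge : α n (j+1) ≤ x := le_trans (hβmono (j+1) i hj hi.le) hx1
      have harg : 1 ≤ (x - α n j) / (α n (j+1) - α n j) := by
        rw [le_div_iff₀ (hpos j hj2)]
        linarith
      rw [Phi_of_one_le l harg, mul_one]
    have hmid : Phi l ((x - α n i) / (α n (i+1) - α n i)) =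
        (stepP l).eval ((x - α n i) / (α n (i+1) - α n i)) := by
      apply Phi_of_mem
      · exact div_nonneg (by linarith) (le_of_lt (hpos i hi))
      · rw [div_le_one (hpos i hi)]; linarith
    rw [hgdef]
    simp only []
    rw [hsplit, htail, add_zero, Finset.sum_range_succ, hhead, hmid, hα0 n]
    ring
  -- g interpolates f at the knots
  have hgknot : ∀ i ≤ k n, g (α n i) = f (α n i) := by
    intro i hi
    rcases Nat.lt_or_ge i (k n) with hlt | hge
    · have := hgeval i hlt (α n i) le_rfl (le_of_lt (hαinc n i hlt))
      rw [this, sub_self, zero_div, stepP_eval_zero, mul_zero, add_zero]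
    · have hik : i = k n := by omega
      subst hik
      obtain ⟨j, hj⟩ : ∃ j, k n = j + 1 := ⟨k n - 1, by have := hk n; omega⟩
      have hjlt : j < k n := by omega
      have h2 := hgeval j hjlt (α n (j+1)) (le_of_lt (hαinc n j hjlt)) le_rfl
      have key : g (α n (j+1)) = f (α n (j+1)) := by
        rw [h2, div_self (ne_of_gt (hpos j hjlt)), stepP_eval_one, mul_one]
        ring
      rw [hj]
      exact key
  -- g is monotone
  have hgmono : Monotone g := by
    intro x y hxy
    rw [hgdef]
    simp only []
    apply add_le_add le_rfl
    apply Finset.sum_le_sum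
    intro i hi
    rw [Finset.mem_range] at hi
    apply mul_le_mul_of_nonneg_left _ (hjump0 i hi)
    apply Phi_monotone
    have := hpos i hi
    gcongr
  -- g is C^l
  have hgcd : ContDiff ℝ (l : ℕ∞) g := by
    rw [hgdef]
    apply ContDiff.add contDiff_const
    apply ContDiff.sum
    intro i _
    apply ContDiff.mul contDiff_const
    exact (Phi_contDiff l).comp ((contDiff_id.sub contDiff_const).div_const _)
  -- g belongs to the cone
  have hgmem : g ∈ SIcone a b (α n) (k n) m l := by
    refine ⟨hgmono.monotoneOn _, hgcd.contDiffOn, ?_⟩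
    intro i hi
    refine ⟨Polynomial.C (f (α n i)) + Polynomial.C (f (α n (i+1)) - f (α n i)) *
      (stepP l).comp (Polynomial.C (α n (i+1) - α n i)⁻¹ * (Polynomial.X - Polynomial.C (α n i))),
      ?_, ?_⟩
    · calc (Polynomial.C (f (α n i)) + Polynomial.C (f (α n (i+1)) - f (α n i)) *
          (stepP l).comp (Polynomial.C (α n (i+1) - α n i)⁻¹ *
            (Polynomial.X - Polynomial.C (α n i)))).natDegree
          ≤ max (Polynomial.C (f (α n i))).natDegree
            ((Polynomial.C (f (α n (i+1)) - f (α n i)) *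
            (stepP l).comp (Polynomial.C (α n (i+1) - α n i)⁻¹ *
              (Polynomial.X - Polynomial.C (α n i)))).natDegree) := Polynomial.natDegree_add_le _ _
        _ ≤ m := by
            apply max_le
            · simp only [Polynomial.natDegree_C]; omega
            · calc (Polynomial.C (f (α n (i+1)) - f (α n i)) *
                  (stepP l).comp (Polynomial.C (α n (i+1) - α n i)⁻¹ *
                    (Polynomial.X - Polynomial.C (α n i)))).natDegree
                  ≤ ((stepP l).comp (Polynomial.C (α n (i+1) - α n i)⁻¹ *
                    (Polynomial.X - Polynomial.C (α n i)))).natDegree :=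
                    Polynomial.natDegree_C_mul_le _ _
                _ ≤ (stepP l).natDegree * (Polynomial.C (α n (i+1) - α n i)⁻¹ *
                    (Polynomial.X - Polynomial.C (α n i))).natDegree :=
                    Polynomial.natDegree_comp_le
                _ ≤ (2 * l + 1) * 1 := by
                    apply Nat.mul_le_mul (stepP_natDegree_le l)
                    calc (Polynomial.C (α n (i+1) - α n i)⁻¹ *
                        (Polynomial.X - Polynomial.C (α n i))).natDegree
                        ≤ (Polynomial.X - Polynomial.C (α n i)).natDegree :=
                          Polynomial.natDegree_C_mul_le _ _
                      _ = 1 := Polynomial.natDegree_X_sub_C _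
                _ = 2 * l + 1 := by ring
                _ ≤ m := hm
    · intro x hx
      rw [hgeval i hi x hx.1 hx.2]
      simp only [Polynomial.eval_add, Polynomial.eval_mul, Polynomial.eval_C,
        Polynomial.eval_comp, Polynomial.eval_sub, Polynomial.eval_X]
      rw [div_eq_inv_mul]
  -- pointwise bound on [a,b]
  have hbound : ∀ x ∈ Set.Icc a b, |f x - g x| ≤ ε₁ := by
    intro x hx
    obtain ⟨i, hi, hx1, hx2⟩ := find_interval (k n) (α n) x (hk n)
      (by rw [hα0 n]; exact hx.1) (by rw [hαk n]; exact hx.2)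
    have hmem1 := hβmem i (by omega)
    have hmem2 := hβmem (i+1) (by omega)
    have hf1 : f (α n i) ≤ f x := hf_mono hmem1 hx hx1
    have hf2 : f x ≤ f (α n (i+1)) := hf_mono hx hmem2 hx2
    have hg1 : f (α n i) ≤ g x := by
      rw [← hgknot i (by omega)]; exact hgmono hx1
    have hg2 : g x ≤ f (α n (i+1)) := by
      rw [← hgknot (i+1) (by omega)]; exact hgmono hx2
    have := hjump_small i hi
    rw [abs_le]
    constructor <;> linarith
  -- integral estimate
  have hgcont : ContinuousOn g (Set.Icc a b) := hgcd.continuous.continuousOn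
  have hcont1 : ContinuousOn (fun x => |f x - g x| ^ p) (Set.Icc a b) :=
    ((hf_cont.sub hgcont).abs).rpow_const (fun x _ => Or.inr (le_of_lt hp0))
  have hint1 : IntervalIntegrable (fun x => |f x - g x| ^ p) volume a b := by
    apply ContinuousOn.intervalIntegrable
    rwa [Set.uIcc_of_le hab.le]
  have hintmono : (∫ x in a..b, |f x - g x| ^ p) ≤ ∫ x in a..b, (ε₁ ^ p : ℝ) := by
    apply intervalIntegral.integral_mono_on hab.le hint1 intervalIntegrable_const
    intro x hx
    exact Real.rpow_le_rpow (abs_nonneg _) (hbound x hx) hp0.le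
  have hconstint : (∫ x in a..b, (ε₁ ^ p : ℝ)) = (b - a) * ε₁ ^ p := by
    rw [intervalIntegral.integral_const, smul_eq_mul]
  have hintnonneg : 0 ≤ ∫ x in a..b, |f x - g x| ^ p := by
    apply intervalIntegral.integral_nonneg hab.le
    intro x _
    exact Real.rpow_nonneg (abs_nonneg _) _
  have hEnonneg : 0 ≤ (∫ x in a..b, |f x - SI n x| ^ p) ^ (1 / p) := by
    apply Real.rpow_nonneg
    apply intervalIntegral.integral_nonneg hab.le
    intro x _
    exact Real.rpow_nonneg (abs_nonneg _) _
  have hchain : (∫ x in a..b, |f x - SI n x| ^ p) ^ (1 / p) ≤ Cb * ε₁ := by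
    calc (∫ x in a..b, |f x - SI n x| ^ p) ^ (1 / p)
        ≤ (∫ x in a..b, |f x - g x| ^ p) ^ (1 / p) := hSI_best n g hgmem
      _ ≤ ((b - a) * ε₁ ^ p) ^ (1 / p) := by
          apply Real.rpow_le_rpow hintnonneg _ (by positivity)
          rw [← hconstint]; exact hintmono
      _ = Cb * ε₁ := by
          rw [Real.mul_rpow (by linarith) (Real.rpow_nonneg hε₁.le _)]
          congr 1
          rw [← Real.rpow_mul hε₁.le, mul_one_div, div_self (ne_of_gt hp0), Real.rpow_one]
  have hfinal : Cb * ε₁ < ε := by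
    have h1 : Cb * ε₁ ≤ (Cb + 1) * ε₁ := by nlinarith
    have h2 : (Cb + 1) * ε₁ = ε / 2 := by
      rw [hε₁def]
      field_simp
    linarith
  rw [Real.dist_eq, sub_zero, abs_of_nonneg hEnonneg]
  exact lt_of_le_of_lt hchain hfinal
end

section
/- Let f : [a,b] → ℝ be continuous and nondecreasing, (Δₙ) a sequence of partitions of [a,b] with ‖Δₙ‖ → 0, l ≥ 0, m ≥ 2l+1, and p ∈ [1,∞). Then the sequence of best L^p approximations SIₙ of f in the cone of nondecreasing Δₙ-piecewise polynomials of degree ≤ m in C^l[a,b] converges uniformly to f on every compact interval [c,d] with a < c < d < b. -/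
open MeasureTheory Filter

open Polynomial Asymptotics

lemma maxpow_hasDerivAt (j : ℕ) (hj : 1 ≤ j) (t : ℝ) :
    HasDerivAt (fun s : ℝ => (max s 0) ^ (j + 1)) ((j + 1 : ℝ) * (max t 0) ^ j) t := by
  rcases lt_trichotomy t 0 with ht | rfl | ht
  · have h0 : (fun s : ℝ => (max s 0) ^ (j + 1)) =ᶠ[nhds t] fun _ => (0 : ℝ) := by
      filter_upwards [eventually_lt_nhds ht] with s hs
      rw [max_eq_right hs.le, zero_pow (by omega)]
    have h1 : HasDerivAt (fun _ : ℝ => (0 : ℝ)) 0 t := hasDerivAt_const _ _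
    have h2 := h1.congr_of_eventuallyEq h0
    rw [max_eq_right ht.le, zero_pow (by omega), mul_zero]
    exact h2
  · rw [hasDerivAt_iff_isLittleO]
    simp only [max_self, zero_pow (by omega : j ≠ 0), mul_zero, sub_zero, smul_zero,
      zero_pow (by omega : j + 1 ≠ 0)]
    have h1 : (fun s : ℝ => (max s 0) ^ j) =o[nhds (0:ℝ)] (fun _ => (1 : ℝ)) := by
      rw [isLittleO_one_iff]
      have hc : Continuous fun s : ℝ => (max s 0) ^ j := by fun_prop
      have h := hc.tendsto 0
      simpa [zero_pow (by omega : j ≠ 0)] using h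
    have h2 : (fun s : ℝ => max s 0) =O[nhds (0:ℝ)] (fun s => s) := by
      rw [isBigO_iff]
      exact ⟨1, Eventually.of_forall fun s => by
        rw [one_mul]; rcases le_or_gt s 0 with h | h
        · rw [max_eq_right h]; simpa using abs_nonneg s
        · rw [max_eq_left h.le]⟩
    have := h1.mul_isBigO h2
    simpa [pow_succ] using this
  · have h0 : (fun s : ℝ => (max s 0) ^ (j + 1)) =ᶠ[nhds t] fun s => s ^ (j + 1) := by
      filter_upwards [eventually_gt_nhds ht] with s hs
      rw [max_eq_left hs.le]
    have h1 : HasDerivAt (fun s : ℝ => s ^ (j + 1)) ((j + 1 : ℝ) * t ^ j) t := by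
      simpa using hasDerivAt_pow (j + 1) t
    have h2 := h1.congr_of_eventuallyEq h0
    rw [max_eq_left ht.le]
    exact h2

lemma maxpow_contDiff (j : ℕ) : ContDiff ℝ (j : ℕ∞) (fun s : ℝ => (max s 0) ^ (j + 1)) := by
  induction j with
  | zero =>
    have : ContDiff ℝ (0 : WithTop ℕ∞) (fun s : ℝ => (max s 0) ^ (0 + 1)) := by
      rw [contDiff_zero]; fun_prop
    exact_mod_cast this
  | succ j ih =>
    have hd : ∀ t : ℝ, HasDerivAt (fun s : ℝ => (max s 0) ^ (j + 1 + 1))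
        (((j:ℝ) + 1 + 1) * (max t 0) ^ (j + 1)) t := fun t => by
      have := maxpow_hasDerivAt (j + 1) (by omega) t
      convert this using 2 <;> push_cast <;> ring
    have hdiff : Differentiable ℝ (fun s : ℝ => (max s 0) ^ (j + 1 + 1)) :=
      fun t => (hd t).differentiableAt
    have hderiv : deriv (fun s : ℝ => (max s 0) ^ (j + 1 + 1)) =
        fun t => ((j:ℝ) + 1 + 1) * (max t 0) ^ (j + 1) := funext fun t => (hd t).deriv
    have ih' : ContDiff ℝ (j : WithTop ℕ∞) (fun s : ℝ => (max s 0) ^ (j + 1)) := by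
      exact_mod_cast ih
    have h : ContDiff ℝ ((j : WithTop ℕ∞) + 1) (fun s : ℝ => (max s 0) ^ (j + 1 + 1)) := by
      rw [contDiff_succ_iff_deriv]
      refine ⟨hdiff, by simp, ?_⟩
      rw [hderiv]
      exact contDiff_const.mul ih'
    exact_mod_cast h

lemma exists_phi (l : ℕ) : ∃ φ : ℝ → ℝ, ContDiff ℝ (l : ℕ∞) φ ∧ Monotone φ ∧
    (∀ t ≤ (0:ℝ), φ t = 0) ∧ (∀ t : ℝ, 1 ≤ t → φ t = 1) ∧
    ∃ Q : Polynomial ℝ, Q.natDegree ≤ 2 * l + 1 ∧ ∀ t ∈ Set.Icc (0:ℝ) 1, φ t = Q.eval t := by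
  rcases Nat.eq_zero_or_pos l with rfl | hl
  · refine ⟨fun t => min (max t 0) 1, ?_, ?_, ?_, ?_, X, by simp, ?_⟩
    · have h : ContDiff ℝ (0 : WithTop ℕ∞) (fun t : ℝ => min (max t 0) 1) := by
        rw [contDiff_zero]; fun_prop
      exact_mod_cast h
    · exact ((monotone_id.max monotone_const).min monotone_const)
    · intro t ht; simp [max_eq_right ht]
    · intro t ht
      show min (max t 0) 1 = 1
      rw [max_eq_left (le_trans zero_le_one ht), min_eq_right ht]
    · rintro t ⟨h0, h1⟩; simp [max_eq_left h0, min_eq_left h1]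
  · obtain ⟨j, rfl⟩ : ∃ j, l = j + 1 := ⟨l - 1, by omega⟩
    set ρ : ℝ → ℝ := fun s => (max (s * (1 - s)) 0) ^ (j + 1) with hρ
    have hρc : Continuous ρ := by fun_prop
    have hρ0 : ∀ s, 0 ≤ ρ s := fun s => pow_nonneg (le_max_right _ _) _
    have hρz : ∀ s : ℝ, s ≤ 0 ∨ 1 ≤ s → ρ s = 0 := by
      rintro s (hs | hs)
      · rw [hρ]
        simp only
        rw [max_eq_right (mul_nonpos_iff.2 (Or.inr ⟨hs, by linarith⟩)), zero_pow (by omega)]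
      · rw [hρ]
        simp only
        rw [max_eq_right (mul_nonpos_iff.2 (Or.inl ⟨by linarith, by linarith⟩)),
          zero_pow (by omega)]
    set F : ℝ → ℝ := fun t => ∫ s in (0:ℝ)..t, ρ s with hF
    have hFd : ∀ t, HasDerivAt F (ρ t) t := fun t =>
      (hρc.integral_hasStrictDerivAt 0 t).hasDerivAt
    set B : ℝ := F 1 with hB
    have hBpos : 0 < B := by
      refine intervalIntegral.intervalIntegral_pos_of_pos_on (hρc.intervalIntegrable 0 1) ?_ one_pos
      rintro x ⟨hx0, hx1⟩
      exact pow_pos (lt_max_iff.2 (Or.inl (mul_pos hx0 (by linarith)))) _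
    refine ⟨fun t => F t / B, ?_, ?_, ?_, ?_, ?_⟩
    · -- smoothness
      have hρd : ContDiff ℝ ((j : ℕ∞)) ρ :=
        (maxpow_contDiff j).comp (contDiff_id.mul (contDiff_const.sub contDiff_id))
      have hFdiff : Differentiable ℝ F := fun t => (hFd t).differentiableAt
      have hderiv : deriv F = ρ := funext fun t => (hFd t).deriv
      have h : ContDiff ℝ ((j : WithTop ℕ∞) + 1) F := by
        rw [contDiff_succ_iff_deriv]
        exact ⟨hFdiff, by simp, by rw [hderiv]; exact_mod_cast hρd⟩
      have h2 : ContDiff ℝ ((j : WithTop ℕ∞) + 1) (fun t => F t / B) := h.div_const B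
      exact_mod_cast h2
    · -- monotone
      intro x y hxy
      have hadd : (∫ s in (0:ℝ)..x, ρ s) + (∫ s in x..y, ρ s) = ∫ s in (0:ℝ)..y, ρ s :=
        intervalIntegral.integral_add_adjacent_intervals (hρc.intervalIntegrable 0 x)
          (hρc.intervalIntegrable x y)
      have hnn : 0 ≤ ∫ s in x..y, ρ s := intervalIntegral.integral_nonneg hxy fun u _ => hρ0 u
      have : F x ≤ F y := by rw [hF]; simp only; rw [← hadd]; linarith
      show F x / B ≤ F y / B
      gcongr
    · -- flat left
      intro t ht
      have : F t = 0 := by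
        rw [hF]
        simp only
        rw [intervalIntegral.integral_congr (g := fun _ => (0:ℝ)) ?_, intervalIntegral.integral_zero]
        intro s hs
        rw [Set.uIcc_of_ge ht] at hs
        exact hρz s (Or.inl hs.2)
      show F t / B = 0
      rw [this, zero_div]
    · -- flat right
      intro t ht
      have h1t : (∫ s in (1:ℝ)..t, ρ s) = 0 := by
        rw [intervalIntegral.integral_congr (g := fun _ => (0:ℝ)) ?_, intervalIntegral.integral_zero]
        intro s hs
        rw [Set.uIcc_of_le ht] at hs
        exact hρz s (Or.inr hs.1)
      have hadd : (∫ s in (0:ℝ)..1, ρ s) + (∫ s in (1:ℝ)..t, ρ s) = ∫ s in (0:ℝ)..t, ρ s :=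
        intervalIntegral.integral_add_adjacent_intervals (hρc.intervalIntegrable 0 1)
          (hρc.intervalIntegrable 1 t)
      have : F t = B := by rw [hF, hB]; simp only; rw [← hadd, h1t, add_zero]
      show F t / B = 1
      rw [this, div_self hBpos.ne']
    · -- polynomial
      set P : Polynomial ℝ := (X * (1 - X)) ^ (j + 1) with hP
      have hPeval : ∀ s : ℝ, P.eval s = (s * (1 - s)) ^ (j + 1) := by
        intro s; simp [hP]
      have hPdeg : P.natDegree ≤ 2 * j + 2 := by
        calc P.natDegree ≤ (j + 1) * (X * (1 - X) : Polynomial ℝ).natDegree :=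
              natDegree_pow_le
          _ ≤ (j + 1) * 2 := by
              refine Nat.mul_le_mul_left _ ?_
              refine le_trans natDegree_mul_le ?_
              have h1 : (1 - X : Polynomial ℝ).natDegree ≤ 1 :=
                le_trans (natDegree_sub_le _ _) (by simp)
              exact le_trans (add_le_add natDegree_X_le h1) (by norm_num)
          _ = 2 * j + 2 := by ring
      set Q₀ : Polynomial ℝ := ∑ i ∈ P.support, C (P.coeff i / (i + 1)) * X ^ (i + 1) with hQ₀
      have hQ₀d : Q₀.derivative = P := by
        rw [hQ₀, map_sum]
        have : ∀ i ∈ P.support, (C (P.coeff i / (i+1)) * X ^ (i+1) : Polynomial ℝ).derivative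
            = C (P.coeff i) * X ^ i := by
          intro i _
          rw [derivative_C_mul_X_pow]
          congr 1
          have h1 : ((i:ℝ) + 1) ≠ 0 := by positivity
          push_cast
          rw [div_mul_cancel₀ _ h1]
        rw [Finset.sum_congr rfl this]
        exact P.as_sum_support_C_mul_X_pow.symm
      have hQ₀deg : Q₀.natDegree ≤ 2 * j + 3 := by
        refine natDegree_sum_le_of_forall_le _ _ ?_
        intro i hi
        exact le_trans (natDegree_C_mul_X_pow_le _ _)
          (by have := P.le_natDegree_of_mem_supp i hi; omega)
      have hFTC : ∀ t : ℝ, (∫ s in (0:ℝ)..t, P.eval s) = Q₀.eval t - Q₀.eval 0 := by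
        intro t
        refine intervalIntegral.integral_eq_sub_of_hasDerivAt (f := fun s => Q₀.eval s) (f' := fun s => P.eval s)
          (fun x _ => ?_) ((P.continuous).intervalIntegrable 0 t)
        have := Q₀.hasDerivAt x
        rwa [hQ₀d] at this
      refine ⟨C (1/B) * (Q₀ - C (Q₀.eval 0)), ?_, ?_⟩
      · refine le_trans (natDegree_C_mul_le _ _) (le_trans (natDegree_sub_le _ _) ?_)
        simp only [natDegree_C, max_le_iff]
        omega
      · rintro t ⟨ht0, ht1⟩
        have hcongr : (∫ s in (0:ℝ)..t, ρ s) = ∫ s in (0:ℝ)..t, P.eval s := by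
          refine intervalIntegral.integral_congr ?_
          intro s hs
          rw [Set.uIcc_of_le ht0] at hs
          rw [hρ]
          simp only
          rw [max_eq_left (mul_nonneg hs.1 (by have := hs.2; have := ht1; nlinarith)), hPeval]
        show F t / B = _
        rw [hF]
        simp only
        rw [hcongr, hFTC t]
        simp [div_eq_mul_inv, mul_comm]

lemma part_mono {k : ℕ} {α : ℕ → ℝ} (hinc : ∀ i < k, α i < α (i + 1)) :
    ∀ {i j}, i ≤ j → j ≤ k → α i ≤ α j := by
  intro i j hij hjk
  induction j with
  | zero => simp_all
  | succ j ih =>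
    rcases Nat.lt_or_ge i (j + 1) with h | h
    · exact le_trans (ih (by omega) (by omega)) (hinc j (by omega)).le
    · have : i = j + 1 := by omega
      simp [this]

lemma part_cover {k : ℕ} {α : ℕ → ℝ} (hk : 1 ≤ k) (hinc : ∀ i < k, α i < α (i + 1))
    {x : ℝ} (hx : α 0 ≤ x) (hxb : x ≤ α k) :
    ∃ i < k, α i ≤ x ∧ x ≤ α (i + 1) := by
  have main : ∀ j, j ≤ k → x ≤ α j → ∃ i < k, α i ≤ x ∧ x ≤ α (i + 1) := by
    intro j
    induction j with
    | zero =>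
      intro _ hxj
      exact ⟨0, by omega, le_antisymm hxj hx ▸ le_rfl,
        le_trans hxj (part_mono hinc (by omega) hk)⟩
    | succ j ih =>
      intro hjk hxj
      rcases le_or_gt (α j) x with h | h
      · exact ⟨j, by omega, h, hxj⟩
      · exact ih (by omega) h.le
  exact main k le_rfl hxb

lemma approx_exists (a b : ℝ) (f : ℝ → ℝ) (hf_mono : MonotoneOn f (Set.Icc a b))
    (l m : ℕ) (hm : 2 * l + 1 ≤ m) (k : ℕ) (hk : 1 ≤ k) (α : ℕ → ℝ)
    (hα0 : α 0 = a) (hαk : α k = b) (hαinc : ∀ i < k, α i < α (i + 1))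
    (ε : ℝ) (hε : 0 ≤ ε) (hosc : ∀ i < k, f (α (i + 1)) - f (α i) ≤ ε) :
    ∃ g ∈ SIcone a b α k m l, ∀ x ∈ Set.Icc a b, |f x - g x| ≤ ε := by
  obtain ⟨φ, hφd, hφm, hφ0, hφ1, Q, hQdeg, hQev⟩ := exists_phi l
  have hφ00 : φ 0 = 0 := hφ0 0 le_rfl
  have hφ11 : φ 1 = 1 := hφ1 1 le_rfl
  have hφnn : ∀ t, 0 ≤ φ t := fun t => by
    rcases le_or_gt t 0 with h | h
    · rw [hφ0 t h]
    · rw [← hφ00]; exact hφm h.le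
  have hφle1 : ∀ t, φ t ≤ 1 := fun t => by
    rcases le_or_gt 1 t with h | h
    · rw [hφ1 t h]
    · rw [← hφ11]; exact hφm h.le
  have hlen : ∀ i < k, 0 < α (i + 1) - α i := fun i hi => sub_pos.2 (hαinc i hi)
  have hknot : ∀ i ≤ k, α i ∈ Set.Icc a b := fun i hik =>
    ⟨hα0 ▸ part_mono hαinc (Nat.zero_le i) hik, hαk ▸ part_mono hαinc hik le_rfl⟩
  have hΔnn : ∀ i < k, 0 ≤ f (α (i + 1)) - f (α i) := fun i hi =>
    sub_nonneg.2 (hf_mono (hknot i hi.le) (hknot (i + 1) hi) (hαinc i hi).le)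
  set g : ℝ → ℝ := fun x => f a + ∑ i ∈ Finset.range k,
    (f (α (i + 1)) - f (α i)) * φ ((x - α i) / (α (i + 1) - α i)) with hg
  have hgmono : Monotone g := by
    intro x y hxy
    refine add_le_add le_rfl (Finset.sum_le_sum fun i hi => ?_)
    rw [Finset.mem_range] at hi
    refine mul_le_mul_of_nonneg_left (hφm ?_) (hΔnn i hi)
    have h := hlen i hi
    gcongr
  have hpiece : ∀ i, i < k → ∀ x, α i ≤ x → x ≤ α (i + 1) →
      g x = f (α i) + (f (α (i + 1)) - f (α i)) * φ ((x - α i) / (α (i + 1) - α i)) := by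
    intro i hik x hxl hxr
    have hterm : ∀ j ∈ Finset.range k,
        (f (α (j + 1)) - f (α j)) * φ ((x - α j) / (α (j + 1) - α j)) =
        (if j < i then f (α (j + 1)) - f (α j) else if j = i then
          (f (α (i + 1)) - f (α i)) * φ ((x - α i) / (α (i + 1) - α i)) else 0) := by
      intro j hj
      rw [Finset.mem_range] at hj
      rcases lt_trichotomy j i with h | h | h
      · rw [if_pos h]
        have h1 : α (j + 1) ≤ x := le_trans (part_mono hαinc (by omega) hik.le) hxl
        have hφeq : φ ((x - α j) / (α (j + 1) - α j)) = 1 := by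
          refine hφ1 _ ?_
          rw [le_div_iff₀ (hlen j hj)]
          linarith
        rw [hφeq, mul_one]
      · rw [if_neg (by omega), if_pos h, h]
      · rw [if_neg (by omega), if_neg (by omega)]
        have h1 : x ≤ α j := le_trans hxr (part_mono hαinc (by omega) hj.le)
        have hφeq : φ ((x - α j) / (α (j + 1) - α j)) = 0 := by
          refine hφ0 _ ?_
          exact div_nonpos_of_nonpos_of_nonneg (by linarith) (hlen j hj).le
        rw [hφeq, mul_zero]
    rw [hg]
    simp only
    rw [Finset.sum_congr rfl hterm]
    rw [← Finset.sum_subset (Finset.range_subset_range.2 (by omega : i + 1 ≤ k))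
      (fun j _ hj => by
        rw [Finset.mem_range, not_lt] at hj
        rw [if_neg (by omega), if_neg (by omega)])]
    rw [Finset.sum_range_succ, if_neg (by omega), if_pos rfl]
    have htel : ∑ j ∈ Finset.range i, (if j < i then f (α (j + 1)) - f (α j) else
        if j = i then (f (α (i + 1)) - f (α i)) * φ ((x - α i) / (α (i + 1) - α i)) else 0)
        = f (α i) - f (α 0) := by
      rw [Finset.sum_congr rfl (fun j hj => if_pos (Finset.mem_range.1 hj))]
      exact Finset.sum_range_sub (fun j => f (α j)) i
    rw [htel, hα0]
    ring
  refine ⟨g, ⟨hgmono.monotoneOn _, ?_, ?_⟩, ?_⟩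
  · -- smooth
    refine ContDiff.contDiffOn ?_
    refine contDiff_const.add (ContDiff.sum fun i _ => ?_)
    exact contDiff_const.mul (hφd.comp ((contDiff_id.sub contDiff_const).div_const _))
  · -- piecewise polynomial
    intro i hik
    refine ⟨C (f (α i)) + C (f (α (i + 1)) - f (α i)) *
      (Q.comp (C (α (i + 1) - α i)⁻¹ * (X - C (α i)))), ?_, ?_⟩
    · refine le_trans (natDegree_add_le _ _) ?_
      simp only [natDegree_C, max_le_iff]
      refine ⟨Nat.zero_le _, le_trans (natDegree_C_mul_le _ _) ?_⟩
      refine le_trans natDegree_comp_le ?_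
      have h1 : ((C (α (i + 1) - α i)⁻¹ * (X - C (α i))) : Polynomial ℝ).natDegree ≤ 1 :=
        le_trans (natDegree_C_mul_le _ _) (natDegree_X_sub_C_le _)
      calc Q.natDegree * ((C (α (i + 1) - α i)⁻¹ * (X - C (α i))) : Polynomial ℝ).natDegree
          ≤ (2 * l + 1) * 1 := Nat.mul_le_mul hQdeg h1
        _ ≤ m := by omega
    · rintro x ⟨hxl, hxr⟩
      have harg : (x - α i) / (α (i + 1) - α i) ∈ Set.Icc (0:ℝ) 1 := by
        constructor
        · exact div_nonneg (by linarith) (hlen i hik).le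
        · rw [div_le_one (hlen i hik)]; linarith
      rw [hpiece i hik x hxl hxr, hQev _ harg]
      simp only [eval_add, eval_C, eval_mul, eval_comp, eval_sub, eval_X]
      congr 2
      rw [div_eq_inv_mul]
  · -- error bound
    rintro x hx
    obtain ⟨i, hik, hxl, hxr⟩ := part_cover hk hαinc (hα0 ▸ hx.1) (hαk ▸ hx.2)
    rw [hpiece i hik x hxl hxr]
    set t := (x - α i) / (α (i + 1) - α i)
    have h1 : f (α i) ≤ f x := hf_mono (hknot i hik.le) hx hxl
    have h2 : f x ≤ f (α (i + 1)) := hf_mono hx (hknot (i + 1) hik) hxr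
    have h3 := hΔnn i hik
    have h4 := hosc i hik
    have h5 : 0 ≤ (f (α (i + 1)) - f (α i)) * φ t := mul_nonneg h3 (hφnn t)
    have h6 : (f (α (i + 1)) - f (α i)) * φ t ≤ f (α (i + 1)) - f (α i) :=
      mul_le_of_le_one_right h3 (hφle1 t)
    rw [abs_le]
    constructor <;> nlinarith

lemma step1 (a b : ℝ) (hab : a < b) (p : ℝ) (hp : 1 ≤ p) (f F g : ℝ → ℝ)
    (hf : ContinuousOn f (Set.Icc a b)) (hF : ContinuousOn F (Set.Icc a b))
    (hgc : ContinuousOn g (Set.Icc a b))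
    (hbest : (∫ x in a..b, |f x - F x| ^ p) ^ (1 / p) ≤
      (∫ x in a..b, |f x - g x| ^ p) ^ (1 / p))
    (ε₁ : ℝ) (hε₁ : 0 ≤ ε₁) (herr : ∀ x ∈ Set.Icc a b, |f x - g x| ≤ ε₁) :
    (∫ x in a..b, |f x - F x| ^ p) ≤ (b - a) * ε₁ ^ p := by
  have hp0 : (0:ℝ) < p := lt_of_lt_of_le one_pos hp
  have hcont : ∀ u : ℝ → ℝ, ContinuousOn u (Set.Icc a b) →
      ContinuousOn (fun x => |f x - u x| ^ p) (Set.Icc a b) := fun u hu =>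
    ((hf.sub hu).abs).rpow_const (fun x _ => Or.inr hp0.le)
  have hint : ∀ u : ℝ → ℝ, ContinuousOn u (Set.Icc a b) →
      IntervalIntegrable (fun x => |f x - u x| ^ p) volume a b := fun u hu => by
    apply ContinuousOn.intervalIntegrable
    rw [Set.uIcc_of_le hab.le]
    exact hcont u hu
  have hInn : 0 ≤ ∫ x in a..b, |f x - F x| ^ p :=
    intervalIntegral.integral_nonneg hab.le fun u _ => Real.rpow_nonneg (abs_nonneg _) p
  have hJnn : 0 ≤ ∫ x in a..b, |f x - g x| ^ p :=
    intervalIntegral.integral_nonneg hab.le fun u _ => Real.rpow_nonneg (abs_nonneg _) p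
  have h2 : (∫ x in a..b, |f x - g x| ^ p) ≤ (b - a) * ε₁ ^ p := by
    calc (∫ x in a..b, |f x - g x| ^ p) ≤ ∫ _ in a..b, ε₁ ^ p := by
          refine intervalIntegral.integral_mono_on hab.le (hint g hgc) intervalIntegrable_const ?_
          exact fun x hx => Real.rpow_le_rpow (abs_nonneg _) (herr x hx) hp0.le
      _ = (b - a) * ε₁ ^ p := by rw [intervalIntegral.integral_const, smul_eq_mul]
  have hRnn : 0 ≤ (b - a) * ε₁ ^ p := mul_nonneg (by linarith) (Real.rpow_nonneg hε₁ p)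
  have hle : (∫ x in a..b, |f x - F x| ^ p) ^ (1/p) ≤ ((b - a) * ε₁ ^ p) ^ (1/p) :=
    le_trans hbest (Real.rpow_le_rpow hJnn h2 (by positivity))
  have h3 := Real.rpow_le_rpow (Real.rpow_nonneg hInn _) hle hp0.le
  rwa [← Real.rpow_mul hInn, ← Real.rpow_mul hRnn, one_div_mul_cancel hp0.ne',
    Real.rpow_one, Real.rpow_one] at h3

/-- If `f` is continuous and nondecreasing on `[a,b]`, `(Δₙ)` is a sequence of partitions with
mesh tending to `0`, `m ≥ 2l+1` and `p ∈ [1,∞)`, then the best `Lᵖ` approximations `SIₙ` of `f`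
among nondecreasing `Δₙ`-piecewise polynomials of degree `≤ m` in `C^l[a,b]` converge to `f`
uniformly on every compact interval `[c,d]` with `a < c < d < b`. -/
theorem stmt10 (a b : ℝ) (hab : a < b) (p : ℝ) (hp : 1 ≤ p)
    (f : ℝ → ℝ) (hf_cont : ContinuousOn f (Set.Icc a b))
    (hf_mono : MonotoneOn f (Set.Icc a b))
    (l m : ℕ) (hm : 2 * l + 1 ≤ m)
    (k : ℕ → ℕ) (hk : ∀ n, 1 ≤ k n) (α : ℕ → ℕ → ℝ)
    (hα0 : ∀ n, α n 0 = a) (hαk : ∀ n, α n (k n) = b)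
    (hαinc : ∀ n, ∀ i < k n, α n i < α n (i + 1))
    (d : ℕ → ℝ) (hd : ∀ n, ∀ i < k n, α n (i + 1) - α n i ≤ d n)
    (hmesh : Tendsto d atTop (nhds 0))
    (SI : ℕ → ℝ → ℝ)
    (hSI_mem : ∀ n, SI n ∈ SIcone a b (α n) (k n) m l)
    (hSI_best : ∀ n, ∀ g ∈ SIcone a b (α n) (k n) m l,
      (∫ x in a..b, |f x - SI n x| ^ p) ^ (1 / p) ≤
        (∫ x in a..b, |f x - g x| ^ p) ^ (1 / p)) :
    ∀ c d : ℝ, a < c → c < d → d < b →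
      TendstoUniformlyOn SI f atTop (Set.Icc c d) := by

  have hp0 : (0:ℝ) < p := lt_of_lt_of_le one_pos hp
  have hknot : ∀ n, ∀ i ≤ k n, α n i ∈ Set.Icc a b := fun n i h =>
    ⟨(hα0 n) ▸ part_mono (hαinc n) (Nat.zero_le _) h,
     (hαk n) ▸ part_mono (hαinc n) h le_rfl⟩
  have hu : UniformContinuousOn f (Set.Icc a b) :=
    isCompact_Icc.uniformContinuousOn_of_continuous hf_cont
  rw [Metric.uniformContinuousOn_iff] at hu
  -- eventual smallness of the Lp error
  have hIn : ∀ T : ℝ, 0 < T → ∀ᶠ n in atTop,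
      (∫ x in a..b, |f x - SI n x| ^ p) < T := by
    intro T hT
    set ε₁ : ℝ := (T / (2 * (b - a))) ^ (1/p) with hε₁def
    have hba : (0:ℝ) < b - a := by linarith
    have hTd : 0 < T / (2 * (b - a)) := div_pos hT (by linarith)
    have hε₁pos : 0 < ε₁ := Real.rpow_pos_of_pos hTd _
    have hε₁p : ε₁ ^ p = T / (2 * (b - a)) := by
      rw [hε₁def, ← Real.rpow_mul hTd.le, one_div_mul_cancel hp0.ne',
        Real.rpow_one]
    obtain ⟨δ₁, hδ₁pos, hδ₁⟩ := hu ε₁ hε₁pos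
    filter_upwards [hmesh.eventually (gt_mem_nhds hδ₁pos)] with n hn
    have hosc : ∀ i < k n, f (α n (i + 1)) - f (α n i) ≤ ε₁ := by
      intro i hi
      have hdist : dist (α n (i + 1)) (α n i) < δ₁ := by
        rw [Real.dist_eq, abs_of_nonneg (by linarith [(hαinc n i hi).le])]
        exact lt_of_le_of_lt (hd n i hi) hn
      have := hδ₁ (α n (i+1)) (hknot n (i+1) hi) (α n i) (hknot n i hi.le) hdist
      rw [Real.dist_eq] at this
      calc f (α n (i + 1)) - f (α n i) ≤ |f (α n (i + 1)) - f (α n i)| := le_abs_self _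
        _ ≤ ε₁ := this.le
    obtain ⟨g, hgmem, herr⟩ := approx_exists a b f hf_mono l m hm (k n) (hk n) (α n)
      (hα0 n) (hαk n) (hαinc n) ε₁ hε₁pos.le hosc
    have := step1 a b hab p hp f (SI n) g hf_cont (hSI_mem n).2.1.continuousOn
      hgmem.2.1.continuousOn (hSI_best n g hgmem) ε₁ hε₁pos.le herr
    calc (∫ x in a..b, |f x - SI n x| ^ p) ≤ (b - a) * ε₁ ^ p := this
      _ = T / 2 := by
          rw [hε₁p]
          field_simp
      _ < T := by linarith
  -- Lewis–Shisha part
  intro c e hac hce heb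
  rw [Metric.tendstoUniformlyOn_iff]
  intro ε hε
  set ε' : ℝ := ε / 4 with hε'def
  have hε' : 0 < ε' := by positivity
  obtain ⟨δ', hδ'pos, hδ'⟩ := hu ε' hε'
  set δ : ℝ := min (δ' / 2) (min (c - a) (b - e)) with hδdef
  have hδpos : 0 < δ := by
    refine lt_min (by positivity) (lt_min (by linarith) (by linarith))
  have hδδ' : δ < δ' := lt_of_le_of_lt (min_le_left _ _) (by linarith)
  have hδca : δ ≤ c - a := le_trans (min_le_right _ _) (min_le_left _ _)
  have hδbe : δ ≤ b - e := le_trans (min_le_right _ _) (min_le_right _ _)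
  filter_upwards [hIn (δ * ε' ^ p) (by positivity)] with n hI x hx
  have hxa : a ≤ x := le_trans (by linarith) hx.1
  have hxb : x ≤ b := le_trans hx.2 (by linarith)
  have hxδa : a ≤ x - δ := by linarith [hx.1]
  have hxδb : x + δ ≤ b := by linarith [hx.2]
  have hSIcont : ContinuousOn (SI n) (Set.Icc a b) := (hSI_mem n).2.1.continuousOn
  have hcontI : ContinuousOn (fun y => |f y - SI n y| ^ p) (Set.Icc a b) :=
    ((hf_cont.sub hSIcont).abs).rpow_const (fun x _ => Or.inr hp0.le)
  have hintI : IntervalIntegrable (fun y => |f y - SI n y| ^ p) volume a b := by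
    apply ContinuousOn.intervalIntegrable
    rwa [Set.uIcc_of_le hab.le]
  have key : |SI n x - f x| ≤ 3 * ε' := by
    by_contra hcon
    push_neg at hcon
    have hlower : ∀ u v : ℝ, a ≤ u → u ≤ v → v ≤ b → (∀ y ∈ Set.Icc u v, ε' ≤ |f y - SI n y|) →
        (v - u) * ε' ^ p ≤ ∫ y in a..b, |f y - SI n y| ^ p := by
      intro u v hau huv hvb hsub
      calc (v - u) * ε' ^ p = ∫ _ in u..v, ε' ^ p := by
            rw [intervalIntegral.integral_const, smul_eq_mul]
        _ ≤ ∫ y in u..v, |f y - SI n y| ^ p := by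
            refine intervalIntegral.integral_mono_on huv intervalIntegrable_const ?_ ?_
            · apply ContinuousOn.intervalIntegrable
              refine hcontI.mono ?_
              rw [Set.uIcc_of_le huv]
              exact Set.Icc_subset_Icc hau hvb
            · exact fun y hy => Real.rpow_le_rpow hε'.le (hsub y hy) hp0.le
        _ ≤ ∫ y in a..b, |f y - SI n y| ^ p := by
            refine intervalIntegral.integral_mono_interval hau huv hvb ?_ hintI
            exact Eventually.of_forall fun y => Real.rpow_nonneg (abs_nonneg _) p
    rcases lt_abs.1 hcon with hbig | hbig
    · -- SI n x too big: contradiction on [x, x+δ]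
      have hsub : ∀ y ∈ Set.Icc x (x + δ), ε' ≤ |f y - SI n y| := by
        intro y hy
        have hyab : y ∈ Set.Icc a b := ⟨le_trans hxa hy.1, le_trans hy.2 hxδb⟩
        have hmono : SI n x ≤ SI n y := (hSI_mem n).1 ⟨hxa, hxb⟩ hyab hy.1
        have hfd : dist (f x) (f y) < ε' := by
          refine hδ' x ⟨hxa, hxb⟩ y hyab ?_
          rw [Real.dist_eq, abs_of_nonpos (by linarith [hy.1])]
          linarith [hy.2]
        rw [Real.dist_eq] at hfd
        have h1 : f x - f y ≤ |f x - f y| := le_abs_self _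
        have h2 : -(f x - f y) ≤ |f x - f y| := neg_le_abs _
        have : ε' ≤ SI n y - f y := by linarith
        calc ε' ≤ SI n y - f y := this
          _ = -(f y - SI n y) := by ring
          _ ≤ |f y - SI n y| := neg_le_abs _
      have := hlower x (x + δ) hxa (by linarith) hxδb hsub
      simp only [add_sub_cancel_left] at this
      linarith
    · -- SI n x too small: contradiction on [x-δ, x]
      have hsub : ∀ y ∈ Set.Icc (x - δ) x, ε' ≤ |f y - SI n y| := by
        intro y hy
        have hyab : y ∈ Set.Icc a b := ⟨le_trans hxδa hy.1, le_trans hy.2 hxb⟩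
        have hmono : SI n y ≤ SI n x := (hSI_mem n).1 hyab ⟨hxa, hxb⟩ hy.2
        have hfd : dist (f x) (f y) < ε' := by
          refine hδ' x ⟨hxa, hxb⟩ y hyab ?_
          rw [Real.dist_eq, abs_of_nonneg (by linarith [hy.2])]
          linarith [hy.1]
        rw [Real.dist_eq] at hfd
        have h1 : -(f x - f y) ≤ |f x - f y| := neg_le_abs _
        have h2 : f x - f y ≤ |f x - f y| := le_abs_self _
        have : ε' ≤ f y - SI n y := by linarith
        calc ε' ≤ f y - SI n y := this
          _ ≤ |f y - SI n y| := le_abs_self _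
      have := hlower (x - δ) x hxδa (by linarith) hxb hsub
      simp only [sub_sub_cancel] at this
      linarith
  rw [Real.dist_eq]
  calc |f x - SI n x| = |SI n x - f x| := abs_sub_comm _ _
    _ ≤ 3 * ε' := key
    _ < ε := by rw [hε'def]; linarith
end
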